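/- arXiv:2405.10096 — 3 statements merged into one kernel-verified Lean document; each statement's English description precedes it below -/
import Mathlib

section
/- Let κ : ℝ → Measure(ℝ) be the Markov kernel of the k-level stochastic quantizer with clipping: for y ∈ ℝ let c(y) = max(−C_q, min(C_q, y)), and if B(r) ≤ c(y) ≤ B(r+1) (with 0 ≤ r ≤ k−2) set κ(y) = ((B(r+1)−c(y))/δ)·Dirac(B(r)) + ((c(y)−B(r))/δ)·Dirac(B(r+1)). Then for every x ∈ [−C_q/2, C_q/2] and every r ∈ {0,1,…,k−1}, the probability that the output of the quantized Gaussian mechanism equals B(r), i.e. ((gaussianReal x σ²).bind κ)({B(r)}), equals the quantized-Gaussian pmf value P_x(r). -/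
open MeasureTheory Real

/-- Density of the normal distribution `N(x, σ²)`. -/
noncomputable def gpdf (σ x t : ℝ) : ℝ :=
  (1 / (σ * Real.sqrt (2 * Real.pi))) * Real.exp (-(t - x) ^ 2 / (2 * σ ^ 2))

/-- Quantization levels `B(r) = -C_q + r · δ`, with `δ = 2·C_q/(k-1)`. -/
noncomputable def Blev (Cq : ℝ) (k : ℕ) (r : ℕ) : ℝ :=
  -Cq + (r : ℝ) * (2 * Cq / ((k : ℝ) - 1))

/-- The quantized-Gaussian pmf `P_x(r)` on `{0, 1, …, k-1}`. -/
noncomputable def qgPmf (Cq σ : ℝ) (k : ℕ) (x : ℝ) (r : ℕ) : ℝ :=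
  if r = 0 then
    (∫ t in Set.Iic (Blev Cq k 0), gpdf σ x t)
      + ∫ t in (Blev Cq k 0)..(Blev Cq k 1),
          gpdf σ x t * (Blev Cq k 1 - t) / (2 * Cq / ((k : ℝ) - 1))
  else if r = k - 1 then
    (∫ t in (Blev Cq k (k - 2))..(Blev Cq k (k - 1)),
        gpdf σ x t * (t - Blev Cq k (k - 2)) / (2 * Cq / ((k : ℝ) - 1)))
      + ∫ t in Set.Ici (Blev Cq k (k - 1)), gpdf σ x t
  else
    (∫ t in (Blev Cq k (r - 1))..(Blev Cq k r),
        gpdf σ x t * (t - Blev Cq k (r - 1)) / (2 * Cq / ((k : ℝ) - 1)))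
      + ∫ t in (Blev Cq k r)..(Blev Cq k (r + 1)),
          gpdf σ x t * (Blev Cq k (r + 1) - t) / (2 * Cq / ((k : ℝ) - 1))
/-- Clipping to `[-C_q, C_q]`. -/
noncomputable def clipTo (Cq y : ℝ) : ℝ := max (-Cq) (min Cq y)

/-- Index `r ∈ {0, …, k-2}` of the quantization cell `[B(r), B(r+1)]` containing the
clipped input. -/
noncomputable def qIndex (Cq : ℝ) (k : ℕ) (y : ℝ) : ℕ :=
  min (k - 2) ⌊(clipTo Cq y + Cq) / (2 * Cq / ((k : ℝ) - 1))⌋₊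

/-- Markov kernel of the `k`-level stochastic quantizer with clipping: with
`c(y)` the clipped input and `B(r) ≤ c(y) ≤ B(r+1)`,
`κ(y) = ((B(r+1) - c(y))/δ)·Dirac(B(r)) + ((c(y) - B(r))/δ)·Dirac(B(r+1))`. -/
noncomputable def qKernel (Cq : ℝ) (k : ℕ) (y : ℝ) : Measure ℝ :=
  ENNReal.ofReal ((Blev Cq k (qIndex Cq k y + 1) - clipTo Cq y) / (2 * Cq / ((k : ℝ) - 1)))
      • Measure.dirac (Blev Cq k (qIndex Cq k y))
    + ENNReal.ofReal ((clipTo Cq y - Blev Cq k (qIndex Cq k y)) / (2 * Cq / ((k : ℝ) - 1)))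
      • Measure.dirac (Blev Cq k (qIndex Cq k y + 1))

namespace QGaux

/-- the weight function: `wfun Cq k r y = qKernel Cq k y {Blev Cq k r}` (as a real). -/
noncomputable def wfun (Cq : ℝ) (k : ℕ) (r : ℕ) (y : ℝ) : ℝ :=
  (if qIndex Cq k y = r then
      (Blev Cq k (r + 1) - clipTo Cq y) / (2 * Cq / ((k : ℝ) - 1)) else 0)
  + (if qIndex Cq k y + 1 = r then
      (clipTo Cq y - Blev Cq k (qIndex Cq k y)) / (2 * Cq / ((k : ℝ) - 1)) else 0)

variable {Cq : ℝ} {m : ℕ}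

lemma cast_k (m : ℕ) : ((m + 2 : ℕ) : ℝ) - 1 = (m : ℝ) + 1 := by push_cast; ring

lemma dpos (hC : 0 < Cq) : 0 < 2 * Cq / (((m + 2 : ℕ) : ℝ) - 1) := by
  rw [cast_k]; positivity

lemma Blev_eq (Cq : ℝ) (m j : ℕ) :
    Blev Cq (m + 2) j = -Cq + (j : ℝ) * (2 * Cq / (((m + 2 : ℕ) : ℝ) - 1)) := rfl

lemma Blev_strictMono (hC : 0 < Cq) : StrictMono (Blev Cq (m + 2)) := by
  intro a b hab
  rw [Blev_eq, Blev_eq]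
  have := dpos (m := m) hC
  have : (a : ℝ) < (b : ℝ) := by exact_mod_cast hab
  nlinarith [dpos (m := m) hC]

lemma Blev_zero : Blev Cq (m + 2) 0 = -Cq := by simp [Blev_eq]

lemma Blev_last (hC : 0 < Cq) : Blev Cq (m + 2) (m + 1) = Cq := by
  rw [Blev_eq, cast_k]
  have h : (m : ℝ) + 1 ≠ 0 := by positivity
  push_cast
  field_simp
  ring

lemma Blev_ge (hC : 0 < Cq) (j : ℕ) : -Cq ≤ Blev Cq (m + 2) j := by
  rw [Blev_eq]
  have := dpos (m := m) hC
  nlinarith [Nat.cast_nonneg (α := ℝ) j]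

lemma Blev_le (hC : 0 < Cq) {j : ℕ} (hj : j ≤ m + 1) : Blev Cq (m + 2) j ≤ Cq := by
  calc Blev Cq (m + 2) j ≤ Blev Cq (m + 2) (m + 1) := (Blev_strictMono hC).monotone hj
  _ = Cq := Blev_last hC

lemma clip_mem (hC : 0 < Cq) (y : ℝ) : clipTo Cq y ∈ Set.Icc (-Cq) Cq := by
  constructor
  · exact le_max_left _ _
  · exact max_le (by linarith) (min_le_left _ _)

lemma clip_of_le (hC : 0 < Cq) {y : ℝ} (h : y ≤ -Cq) : clipTo Cq y = -Cq := by
  rw [clipTo, min_eq_right (by linarith), max_eq_left h]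

lemma clip_of_mem (hC : 0 < Cq) {y : ℝ} (h1 : -Cq ≤ y) (h2 : y ≤ Cq) : clipTo Cq y = y := by
  rw [clipTo, min_eq_right h2, max_eq_right h1]

lemma clip_of_ge (hC : 0 < Cq) {y : ℝ} (h : Cq ≤ y) : clipTo Cq y = Cq := by
  rw [clipTo, min_eq_left h, max_eq_right (by linarith)]

end QGaux
namespace QGaux
variable {Cq : ℝ} {m : ℕ}

lemma qIndex_eq (Cq : ℝ) (m : ℕ) (y : ℝ) :
    qIndex Cq (m + 2) y
      = min m ⌊(clipTo Cq y + Cq) / (2 * Cq / (((m + 2 : ℕ) : ℝ) - 1))⌋₊ := rfl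

lemma qIndex_le (Cq : ℝ) (m : ℕ) (y : ℝ) : qIndex Cq (m + 2) y ≤ m := min_le_left _ _

/-- `B(qIndex y) ≤ clip y ≤ B(qIndex y + 1)`. -/
lemma cell (hC : 0 < Cq) (y : ℝ) :
    Blev Cq (m + 2) (qIndex Cq (m + 2) y) ≤ clipTo Cq y ∧
      clipTo Cq y ≤ Blev Cq (m + 2) (qIndex Cq (m + 2) y + 1) := by
  have hD : (0:ℝ) < 2 * Cq / ((m : ℝ) + 1) := by positivity
  obtain ⟨hc1, hc2⟩ := clip_mem hC y
  simp only [qIndex_eq, Blev_eq, cast_k]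
  set D := 2 * Cq / ((m : ℝ) + 1) with hDdef
  set c := clipTo Cq y with hcdef
  set u := (c + Cq) / D with hu
  have hu0 : 0 ≤ u := div_nonneg (by linarith) hD.le
  have hcu : c + Cq = u * D := by rw [hu, div_mul_cancel₀ _ hD.ne']
  have huk : u ≤ (m : ℝ) + 1 := by
    rw [hu, div_le_iff₀ hD, hDdef]
    have : ((m:ℝ) + 1) * (2 * Cq / ((m:ℝ)+1)) = 2 * Cq := by field_simp
    rw [this]; linarith
  have hfl : (⌊u⌋₊ : ℝ) ≤ u := Nat.floor_le hu0
  constructor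
  · have h1 : ((min m ⌊u⌋₊ : ℕ) : ℝ) ≤ u :=
      le_trans (by exact_mod_cast Nat.cast_le.mpr (min_le_right m ⌊u⌋₊)) hfl
    have := mul_le_mul_of_nonneg_right h1 hD.le
    linarith
  · have h2 : u ≤ ((min m ⌊u⌋₊ : ℕ) : ℝ) + 1 := by
      rcases le_or_gt ⌊u⌋₊ m with h | h
      · rw [min_eq_right h]
        exact (Nat.lt_floor_add_one u).le
      · rw [min_eq_left h.le]
        exact huk.trans (by norm_num)
    have := mul_le_mul_of_nonneg_right h2 hD.le
    push_cast at this ⊢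
    linarith

lemma qIndex_le_of_le (hC : 0 < Cq) {j : ℕ} {y : ℝ} (h : y ≤ Blev Cq (m + 2) j) :
    qIndex Cq (m + 2) y ≤ j := by
  have hD : (0:ℝ) < 2 * Cq / ((m : ℝ) + 1) := by positivity
  have hclip : clipTo Cq y ≤ Blev Cq (m + 2) j :=
    max_le (Blev_ge hC j) (le_trans (min_le_right _ _) h)
  have hu : (clipTo Cq y + Cq) / (2 * Cq / (((m + 2 : ℕ) : ℝ) - 1)) ≤ (j : ℝ) := by
    rw [cast_k, div_le_iff₀ hD]
    rw [Blev_eq, cast_k] at hclip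
    linarith
  calc qIndex Cq (m + 2) y ≤ ⌊(clipTo Cq y + Cq) / (2 * Cq / (((m + 2 : ℕ) : ℝ) - 1))⌋₊ :=
        min_le_right _ _
  _ ≤ ⌊(j : ℝ)⌋₊ := Nat.floor_mono hu
  _ = j := Nat.floor_natCast j

lemma le_qIndex_of_le (hC : 0 < Cq) {j : ℕ} {y : ℝ} (hj : j ≤ m)
    (h : Blev Cq (m + 2) j ≤ y) : j ≤ qIndex Cq (m + 2) y := by
  have hD : (0:ℝ) < 2 * Cq / ((m : ℝ) + 1) := by positivity
  have hclip : Blev Cq (m + 2) j ≤ clipTo Cq y :=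
    le_max_of_le_right (le_min (Blev_le hC (by omega)) h)
  have hu : (j : ℝ) ≤ (clipTo Cq y + Cq) / (2 * Cq / (((m + 2 : ℕ) : ℝ) - 1)) := by
    rw [cast_k, le_div_iff₀ hD]
    rw [Blev_eq, cast_k] at hclip
    linarith
  have : j ≤ ⌊(clipTo Cq y + Cq) / (2 * Cq / (((m + 2 : ℕ) : ℝ) - 1))⌋₊ := by
    rw [← Nat.floor_natCast (R := ℝ) j]
    exact Nat.floor_mono hu
  exact le_min hj this

lemma qIndex_of_mem (hC : 0 < Cq) {j : ℕ} {y : ℝ} (hj : j ≤ m)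
    (h1 : Blev Cq (m + 2) j ≤ y) (h2 : y < Blev Cq (m + 2) (j + 1)) :
    qIndex Cq (m + 2) y = j := by
  have h2' : y ≤ Blev Cq (m + 2) (j + 1) := h2.le
  have hle := qIndex_le_of_le hC h2'
  have hge := le_qIndex_of_le hC hj h1
  rcases Nat.lt_or_ge (qIndex Cq (m + 2) y) (j + 1) with h | h
  · omega
  · exfalso
    have hcell := (cell (m := m) hC y).1
    have hclip : clipTo Cq y = y :=
      clip_of_mem hC (le_trans (Blev_ge hC j) h1)
        (le_trans h2' (Blev_le hC (by omega)))
    have : Blev Cq (m + 2) (j + 1) ≤ Blev Cq (m + 2) (qIndex Cq (m + 2) y) :=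
      (Blev_strictMono hC).monotone (by omega)
    rw [hclip] at hcell
    linarith

lemma qIndex_of_ge (hC : 0 < Cq) {y : ℝ} (h : Cq ≤ y) : qIndex Cq (m + 2) y = m := by
  have hge : m ≤ qIndex Cq (m + 2) y :=
    le_qIndex_of_le hC le_rfl (le_trans (Blev_le hC (by omega)) h)
  exact le_antisymm (qIndex_le Cq m y) hge

end QGaux
namespace QGaux
variable {Cq : ℝ} {m : ℕ}

lemma Blev_succ_sub (Cq : ℝ) (m j : ℕ) :
    Blev Cq (m + 2) (j + 1) - Blev Cq (m + 2) j = 2 * Cq / (((m + 2 : ℕ) : ℝ) - 1) := by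
  simp only [Blev_eq]
  push_cast
  ring

lemma Cq_sub_Blev (hC : 0 < Cq) :
    Cq - Blev Cq (m + 2) m = 2 * Cq / (((m + 2 : ℕ) : ℝ) - 1) := by
  nth_rewrite 1 [← Blev_last hC (m := m)]
  exact Blev_succ_sub Cq m m

lemma wfun_first (hC : 0 < Cq) {y : ℝ} (h : y ≤ Blev Cq (m + 2) 0) :
    wfun Cq (m + 2) 0 y = 1 := by
  have hy : y ≤ -Cq := by rwa [Blev_zero] at h
  have hq : qIndex Cq (m + 2) y = 0 := by
    have := qIndex_le_of_le hC h; omega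
  have hclip := clip_of_le hC hy
  rw [wfun, hq, hclip, if_pos rfl, if_neg (by omega), add_zero]
  rw [show -Cq = Blev Cq (m + 2) 0 from (Blev_zero).symm, Blev_succ_sub Cq m 0]
  exact div_self (ne_of_gt (dpos hC))

lemma wfun_last (hC : 0 < Cq) {y : ℝ} (h : Blev Cq (m + 2) (m + 1) ≤ y) :
    wfun Cq (m + 2) (m + 1) y = 1 := by
  have hy : Cq ≤ y := by rwa [Blev_last hC] at h
  have hq : qIndex Cq (m + 2) y = m := qIndex_of_ge hC hy
  have hclip := clip_of_ge hC hy
  rw [wfun, hq, hclip, if_neg (by omega), if_pos rfl, zero_add, Cq_sub_Blev hC]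
  exact div_self (ne_of_gt (dpos hC))

lemma wfun_left (hC : 0 < Cq) {s : ℕ} {y : ℝ} (h : y ≤ Blev Cq (m + 2) s) :
    wfun Cq (m + 2) (s + 1) y = 0 := by
  have hle := qIndex_le_of_le hC h
  rw [wfun, if_neg (by omega)]
  by_cases h2 : qIndex Cq (m + 2) y + 1 = s + 1
  · have hq : qIndex Cq (m + 2) y = s := by omega
    have hclip : clipTo Cq y = Blev Cq (m + 2) s := by
      refine le_antisymm (max_le (Blev_ge hC s) (le_trans (min_le_right _ _) h)) ?_
      have := (cell (m := m) hC y).1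
      rwa [hq] at this
    rw [if_pos h2, hq, hclip]
    simp
  · rw [if_neg h2]; simp

lemma wfun_right (hC : 0 < Cq) {r : ℕ} (hr : r ≤ m) {y : ℝ}
    (h : Blev Cq (m + 2) (r + 1) ≤ y) : wfun Cq (m + 2) r y = 0 := by
  rcases hr.lt_or_eq with h' | rfl
  · have hge : r + 1 ≤ qIndex Cq (m + 2) y := le_qIndex_of_le hC (by omega) h
    rw [wfun, if_neg (by omega), if_neg (by omega)]
    simp
  · have hy : Cq ≤ y := by rwa [Blev_last hC] at h
    have hq : qIndex Cq (r + 2) y = r := qIndex_of_ge hC hy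
    have hclip := clip_of_ge hC hy
    rw [wfun, if_pos hq, if_neg (by omega), hclip, Blev_last hC]
    simp

lemma wfun_up (hC : 0 < Cq) {s : ℕ} (hs : s ≤ m) {y : ℝ}
    (h1 : Blev Cq (m + 2) s ≤ y) (h2 : y ≤ Blev Cq (m + 2) (s + 1)) :
    wfun Cq (m + 2) (s + 1) y
      = (y - Blev Cq (m + 2) s) / (2 * Cq / (((m + 2 : ℕ) : ℝ) - 1)) := by
  have hclip : clipTo Cq y = y :=
    clip_of_mem hC (le_trans (Blev_ge hC s) h1) (le_trans h2 (Blev_le hC (by omega)))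
  rcases h2.lt_or_eq with h2' | h2'
  · have hq : qIndex Cq (m + 2) y = s := qIndex_of_mem hC hs h1 h2'
    rw [wfun, hq, if_neg (by omega), if_pos rfl, hclip, zero_add]
  · rcases Nat.lt_or_ge s m with h' | h'
    · have hq : qIndex Cq (m + 2) y = s + 1 := by
        refine qIndex_of_mem hC (by omega) (by rw [h2']) ?_
        rw [h2']
        exact Blev_strictMono hC (by omega)
      rw [wfun, hq, if_pos rfl, if_neg (by omega), hclip, add_zero, h2',
        Blev_succ_sub, Blev_succ_sub]
    · obtain rfl : s = m := le_antisymm hs h'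
      have hy : Cq ≤ y := by rw [h2', Blev_last hC]
      have hq : qIndex Cq (s + 2) y = s := qIndex_of_ge hC hy
      rw [wfun, hq, if_neg (by omega), if_pos rfl, hclip, zero_add]

lemma wfun_down (hC : 0 < Cq) {r : ℕ} (hr : r ≤ m) {y : ℝ}
    (h1 : Blev Cq (m + 2) r ≤ y) (h2 : y ≤ Blev Cq (m + 2) (r + 1)) :
    wfun Cq (m + 2) r y
      = (Blev Cq (m + 2) (r + 1) - y) / (2 * Cq / (((m + 2 : ℕ) : ℝ) - 1)) := by
  have hclip : clipTo Cq y = y :=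
    clip_of_mem hC (le_trans (Blev_ge hC r) h1) (le_trans h2 (Blev_le hC (by omega)))
  rcases h2.lt_or_eq with h2' | h2'
  · have hq : qIndex Cq (m + 2) y = r := qIndex_of_mem hC hr h1 h2'
    rw [wfun, hq, if_pos rfl, if_neg (by omega), hclip, add_zero]
  · rcases Nat.lt_or_ge r m with h' | h'
    · have hq : qIndex Cq (m + 2) y = r + 1 := by
        refine qIndex_of_mem hC (by omega) (by rw [h2']) ?_
        rw [h2']
        exact Blev_strictMono hC (by omega)
      rw [wfun, hq, if_neg (by omega), if_neg (by omega), h2']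
      simp
    · obtain rfl : r = m := le_antisymm hr h'
      have hy : Cq ≤ y := by rw [h2', Blev_last hC]
      have hq : qIndex Cq (r + 2) y = r := qIndex_of_ge hC hy
      rw [wfun, hq, if_pos rfl, if_neg (by omega), hclip, add_zero, h2']

end QGaux
namespace QGaux
variable {Cq : ℝ} {m : ℕ}

lemma kernel_eval (hC : 0 < Cq) (r : ℕ) (y : ℝ) :
    qKernel Cq (m + 2) y {Blev Cq (m + 2) r} = ENNReal.ofReal (wfun Cq (m + 2) r y) := by
  have hinj := (Blev_strictMono (m := m) hC).injective
  rw [qKernel, Measure.add_apply, Measure.smul_apply, Measure.smul_apply, smul_eq_mul,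
    smul_eq_mul, Measure.dirac_apply' _ (measurableSet_singleton _),
    Measure.dirac_apply' _ (measurableSet_singleton _), wfun]
  by_cases h1 : qIndex Cq (m + 2) y = r
  · have h2 : ¬(qIndex Cq (m + 2) y + 1 = r) := by omega
    rw [if_pos h1, if_neg h2, add_zero,
      Set.indicator_of_mem (by simp [h1]) (1 : ℝ → ENNReal),
      Set.indicator_of_notMem (by simp only [Set.mem_singleton_iff, hinj.eq_iff]; omega)
        (1 : ℝ → ENNReal), h1]
    simp
  · rw [if_neg h1,
      Set.indicator_of_notMem (by simp only [Set.mem_singleton_iff, hinj.eq_iff]; omega)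
        (1 : ℝ → ENNReal), zero_add]
    by_cases h2 : qIndex Cq (m + 2) y + 1 = r
    · rw [if_pos h2, Set.indicator_of_mem (by simp [h2]) (1 : ℝ → ENNReal), h2]
      simp
    · rw [if_neg h2,
        Set.indicator_of_notMem (by simp only [Set.mem_singleton_iff, hinj.eq_iff]; omega)
          (1 : ℝ → ENNReal)]
      simp

lemma wfun_mem (hC : 0 < Cq) (r : ℕ) (y : ℝ) :
    wfun Cq (m + 2) r y ∈ Set.Icc (0 : ℝ) 1 := by
  have hD := dpos (m := m) hC
  obtain ⟨hc1, hc2⟩ := cell (m := m) hC y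
  have hdiff := Blev_succ_sub Cq m (qIndex Cq (m + 2) y)
  rw [wfun]
  by_cases h1 : qIndex Cq (m + 2) y = r
  · have h2 : ¬(qIndex Cq (m + 2) y + 1 = r) := by omega
    rw [if_pos h1, if_neg h2, add_zero, ← h1]
    constructor
    · exact div_nonneg (by linarith) hD.le
    · rw [div_le_one hD]; linarith
  · rw [if_neg h1]
    by_cases h2 : qIndex Cq (m + 2) y + 1 = r
    · rw [if_pos h2, zero_add]
      constructor
      · exact div_nonneg (by linarith) hD.le
      · rw [div_le_one hD]; linarith
    · rw [if_neg h2]; norm_num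

lemma measurable_clip : Measurable (clipTo Cq) :=
  (continuous_const.max (continuous_const.min continuous_id)).measurable

lemma measurable_qIndex (Cq : ℝ) (k : ℕ) : Measurable (qIndex Cq k) := by
  apply Measurable.min measurable_const
  exact (((measurable_clip).add_const Cq).div_const _).nat_floor

lemma measurable_BqIndex (Cq : ℝ) (k : ℕ) (j : ℕ) :
    Measurable fun y => Blev Cq k (qIndex Cq k y + j) := by
  have : Measurable fun n : ℕ => Blev Cq k (n + j) := measurable_from_top
  exact this.comp (measurable_qIndex Cq k)

lemma measurable_wfun (Cq : ℝ) (k : ℕ) (r : ℕ) : Measurable (wfun Cq k r) := by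
  apply Measurable.add
  · apply Measurable.ite
    · exact measurable_qIndex Cq k (measurableSet_singleton r)
    · exact ((measurable_const.sub measurable_clip).div_const _)
    · exact measurable_const
  · apply Measurable.ite
    · have : MeasurableSet {n : ℕ | n + 1 = r} := trivial
      exact measurable_qIndex Cq k this
    · refine Measurable.div_const ?_ _
      refine measurable_clip.sub ?_
      simpa using measurable_BqIndex Cq k 0
    · exact measurable_const

lemma measurable_qKernel (Cq : ℝ) (k : ℕ) : Measurable (qKernel Cq k) := by
  refine Measure.measurable_of_measurable_coe _ fun s hs => ?_
  simp only [qKernel, Measure.add_apply, Measure.smul_apply, smul_eq_mul,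
    Measure.dirac_apply' _ hs]
  apply Measurable.add
  · apply Measurable.mul
    · exact (((measurable_BqIndex Cq k 1).sub measurable_clip).div_const _).ennreal_ofReal
    · have h1 : Measurable (s.indicator (1 : ℝ → ENNReal)) := measurable_one.indicator hs
      exact h1.comp (by simpa using measurable_BqIndex Cq k 0)
  · apply Measurable.mul
    · exact ((measurable_clip.sub (by simpa using measurable_BqIndex Cq k 0)).div_const
        _).ennreal_ofReal
    · have h1 : Measurable (s.indicator (1 : ℝ → ENNReal)) := measurable_one.indicator hs
      exact h1.comp (measurable_BqIndex Cq k 1)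

lemma integrable_wg (hC : 0 < Cq) (x : ℝ) (v : NNReal) (r : ℕ) :
    Integrable (fun y => wfun Cq (m + 2) r y * ProbabilityTheory.gaussianPDFReal x v y) := by
  refine (ProbabilityTheory.integrable_gaussianPDFReal x v).bdd_mul
    (c := 1) (measurable_wfun Cq (m + 2) r).aestronglyMeasurable
    (Filter.Eventually.of_forall fun y => ?_)
  obtain ⟨h0, h1⟩ := wfun_mem (m := m) hC r y
  rw [Real.norm_eq_abs, abs_of_nonneg h0]
  exact h1

end QGaux
namespace QGaux
variable {Cq σ : ℝ} {m : ℕ}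

lemma gpdf_eq (hσ : 0 < σ) (x y : ℝ) :
    ProbabilityTheory.gaussianPDFReal x (σ ^ 2).toNNReal y = gpdf σ x y := by
  rw [ProbabilityTheory.gaussianPDFReal, gpdf,
    Real.coe_toNNReal _ (sq_nonneg σ),
    show 2 * Real.pi * σ ^ 2 = (2 * Real.pi) * σ ^ 2 by ring,
    Real.sqrt_mul (by positivity) (σ ^ 2), Real.sqrt_sq hσ.le]
  rw [one_div, mul_comm (Real.sqrt (2 * Real.pi)) σ]

lemma bind_eval (hC : 0 < Cq) (hσ : 0 < σ) (x : ℝ) (r : ℕ) :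
    ((ProbabilityTheory.gaussianReal x (σ ^ 2).toNNReal).bind (qKernel Cq (m + 2)))
        {Blev Cq (m + 2) r}
      = ENNReal.ofReal (∫ y, wfun Cq (m + 2) r y * gpdf σ x y) := by
  have hv : (σ ^ 2).toNNReal ≠ 0 := by
    simp only [ne_eq, Real.toNNReal_eq_zero, not_le]
    positivity
  rw [Measure.bind_apply (measurableSet_singleton _)
    (measurable_qKernel Cq (m + 2)).aemeasurable]
  have h1 : ∀ y, qKernel Cq (m + 2) y {Blev Cq (m + 2) r}
      = ENNReal.ofReal (wfun Cq (m + 2) r y) := kernel_eval hC r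
  simp_rw [h1]
  rw [ProbabilityTheory.gaussianReal_of_var_ne_zero x hv,
    lintegral_withDensity_eq_lintegral_mul _ (ProbabilityTheory.measurable_gaussianPDF x _)
      (measurable_wfun Cq (m + 2) r).ennreal_ofReal]
  have h2 : ∀ y, (ProbabilityTheory.gaussianPDF x (σ ^ 2).toNNReal
        * fun y => ENNReal.ofReal (wfun Cq (m + 2) r y)) y
      = ENNReal.ofReal (wfun Cq (m + 2) r y
          * ProbabilityTheory.gaussianPDFReal x (σ ^ 2).toNNReal y) := by
    intro y
    rw [Pi.mul_apply, ProbabilityTheory.gaussianPDF, mul_comm,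
      ← ENNReal.ofReal_mul (wfun_mem hC r y).1]
  simp_rw [h2]
  rw [← ofReal_integral_eq_lintegral_ofReal (integrable_wg hC x _ r)
    (Filter.Eventually.of_forall fun y => mul_nonneg (wfun_mem hC r y).1
      (ProbabilityTheory.gaussianPDFReal_nonneg x _ y))]
  congr 1
  refine integral_congr_ae (Filter.Eventually.of_forall fun y => ?_)
  simp only
  rw [gpdf_eq hσ]

end QGaux
namespace QGaux
variable {Cq σ : ℝ} {m : ℕ}

lemma split_Ioi {f : ℝ → ℝ} (hf : Integrable f) {b c : ℝ} (hbc : b ≤ c) :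
    ∫ y in Set.Ioi b, f y = (∫ y in Set.Ioc b c, f y) + ∫ y in Set.Ioi c, f y := by
  rw [← Set.Ioc_union_Ioi_eq_Ioi hbc,
    setIntegral_union (Set.Ioc_disjoint_Ioi le_rfl) measurableSet_Ioi
      hf.integrableOn hf.integrableOn]

lemma split3 {f : ℝ → ℝ} (hf : Integrable f) {a b : ℝ} (hab : a ≤ b) :
    ∫ y, f y = ((∫ y in Set.Iic a, f y) + ∫ y in Set.Ioc a b, f y)
      + ∫ y in Set.Ioi b, f y := by
  rw [← intervalIntegral.integral_Iic_add_Ioi (b := a) hf.integrableOn hf.integrableOn,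
    split_Ioi hf hab, add_assoc]

lemma split4 {f : ℝ → ℝ} (hf : Integrable f) {a b c : ℝ} (hab : a ≤ b) (hbc : b ≤ c) :
    ∫ y, f y = (((∫ y in Set.Iic a, f y) + ∫ y in Set.Ioc a b, f y)
      + ∫ y in Set.Ioc b c, f y) + ∫ y in Set.Ioi c, f y := by
  rw [split3 hf hab, split_Ioi hf hbc]
  ring

lemma integrable_wgpdf (hC : 0 < Cq) (hσ : 0 < σ) (x : ℝ) (r : ℕ) :
    Integrable (fun y => wfun Cq (m + 2) r y * gpdf σ x y) := by
  simp_rw [← gpdf_eq hσ]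
  exact integrable_wg hC x _ r

lemma integral_case0 (hC : 0 < Cq) (hσ : 0 < σ) (x : ℝ) :
    ∫ y, wfun Cq (m + 2) 0 y * gpdf σ x y = qgPmf Cq σ (m + 2) x 0 := by
  have hint := integrable_wgpdf (m := m) hC hσ x 0
  have h01 : Blev Cq (m + 2) 0 ≤ Blev Cq (m + 2) 1 :=
    ((Blev_strictMono hC) (by omega)).le
  rw [split3 hint h01, qgPmf, if_pos rfl]
  have e1 : ∫ y in Set.Iic (Blev Cq (m + 2) 0), wfun Cq (m + 2) 0 y * gpdf σ x y
      = ∫ t in Set.Iic (Blev Cq (m + 2) 0), gpdf σ x t :=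
    setIntegral_congr_fun measurableSet_Iic fun y hy => by
      rw [wfun_first hC hy, one_mul]
  have e2 : ∫ y in Set.Ioc (Blev Cq (m + 2) 0) (Blev Cq (m + 2) 1),
        wfun Cq (m + 2) 0 y * gpdf σ x y
      = ∫ t in (Blev Cq (m + 2) 0)..(Blev Cq (m + 2) 1),
          gpdf σ x t * (Blev Cq (m + 2) 1 - t) / (2 * Cq / (((m + 2 : ℕ) : ℝ) - 1)) := by
    rw [intervalIntegral.integral_of_le h01]
    refine setIntegral_congr_fun measurableSet_Ioc fun y hy => ?_
    rw [wfun_down hC (Nat.zero_le m) hy.1.le hy.2]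
    ring
  have e3 : ∫ y in Set.Ioi (Blev Cq (m + 2) 1), wfun Cq (m + 2) 0 y * gpdf σ x y = 0 := by
    rw [setIntegral_congr_fun measurableSet_Ioi
      (fun y (hy : Blev Cq (m + 2) 1 < y) => by
        rw [wfun_right hC (Nat.zero_le m) hy.le, zero_mul]), integral_zero]
  rw [e1, e2, e3, add_zero]

lemma integral_case_last (hC : 0 < Cq) (hσ : 0 < σ) (x : ℝ) :
    ∫ y, wfun Cq (m + 2) (m + 1) y * gpdf σ x y = qgPmf Cq σ (m + 2) x (m + 1) := by
  have hint := integrable_wgpdf (m := m) hC hσ x (m + 1)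
  have h01 : Blev Cq (m + 2) m ≤ Blev Cq (m + 2) (m + 1) :=
    ((Blev_strictMono hC) (by omega)).le
  rw [split3 hint h01, qgPmf, if_neg (by omega), if_pos (by omega)]
  have hk2 : m + 2 - 2 = m := rfl
  have hk1 : m + 2 - 1 = m + 1 := rfl
  rw [hk2, hk1]
  have e1 : ∫ y in Set.Iic (Blev Cq (m + 2) m), wfun Cq (m + 2) (m + 1) y * gpdf σ x y
      = 0 := by
    rw [setIntegral_congr_fun measurableSet_Iic
      (fun y (hy : y ≤ Blev Cq (m + 2) m) => by
        rw [wfun_left hC hy, zero_mul]), integral_zero]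
  have e2 : ∫ y in Set.Ioc (Blev Cq (m + 2) m) (Blev Cq (m + 2) (m + 1)),
        wfun Cq (m + 2) (m + 1) y * gpdf σ x y
      = ∫ t in (Blev Cq (m + 2) m)..(Blev Cq (m + 2) (m + 1)),
          gpdf σ x t * (t - Blev Cq (m + 2) m) / (2 * Cq / (((m + 2 : ℕ) : ℝ) - 1)) := by
    rw [intervalIntegral.integral_of_le h01]
    refine setIntegral_congr_fun measurableSet_Ioc fun y hy => ?_
    rw [wfun_up hC le_rfl hy.1.le hy.2]
    ring
  have e3 : ∫ y in Set.Ioi (Blev Cq (m + 2) (m + 1)), wfun Cq (m + 2) (m + 1) y * gpdf σ x y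
      = ∫ t in Set.Ici (Blev Cq (m + 2) (m + 1)), gpdf σ x t := by
    rw [integral_Ici_eq_integral_Ioi]
    refine setIntegral_congr_fun measurableSet_Ioi fun y (hy : Blev Cq (m+2) (m+1) < y) => ?_
    rw [wfun_last hC hy.le, one_mul]
  rw [e1, e2, e3, zero_add]

lemma integral_case_mid (hC : 0 < Cq) (hσ : 0 < σ) (x : ℝ) {s : ℕ} (hs : s + 1 ≤ m) :
    ∫ y, wfun Cq (m + 2) (s + 1) y * gpdf σ x y = qgPmf Cq σ (m + 2) x (s + 1) := by
  have hint := integrable_wgpdf (m := m) hC hσ x (s + 1)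
  have h01 : Blev Cq (m + 2) s ≤ Blev Cq (m + 2) (s + 1) :=
    ((Blev_strictMono hC) (by omega)).le
  have h12 : Blev Cq (m + 2) (s + 1) ≤ Blev Cq (m + 2) (s + 2) :=
    ((Blev_strictMono hC) (by omega)).le
  rw [split4 hint h01 h12, qgPmf, if_neg (by omega), if_neg (by omega)]
  have hk : s + 1 - 1 = s := rfl
  rw [hk]
  have e1 : ∫ y in Set.Iic (Blev Cq (m + 2) s), wfun Cq (m + 2) (s + 1) y * gpdf σ x y
      = 0 := by
    rw [setIntegral_congr_fun measurableSet_Iic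
      (fun y (hy : y ≤ Blev Cq (m + 2) s) => by
        rw [wfun_left hC hy, zero_mul]), integral_zero]
  have e2 : ∫ y in Set.Ioc (Blev Cq (m + 2) s) (Blev Cq (m + 2) (s + 1)),
        wfun Cq (m + 2) (s + 1) y * gpdf σ x y
      = ∫ t in (Blev Cq (m + 2) s)..(Blev Cq (m + 2) (s + 1)),
          gpdf σ x t * (t - Blev Cq (m + 2) s) / (2 * Cq / (((m + 2 : ℕ) : ℝ) - 1)) := by
    rw [intervalIntegral.integral_of_le h01]
    refine setIntegral_congr_fun measurableSet_Ioc fun y hy => ?_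
    rw [wfun_up hC (by omega) hy.1.le hy.2]
    ring
  have e3 : ∫ y in Set.Ioc (Blev Cq (m + 2) (s + 1)) (Blev Cq (m + 2) (s + 2)),
        wfun Cq (m + 2) (s + 1) y * gpdf σ x y
      = ∫ t in (Blev Cq (m + 2) (s + 1))..(Blev Cq (m + 2) (s + 2)),
          gpdf σ x t * (Blev Cq (m + 2) (s + 2) - t) / (2 * Cq / (((m + 2 : ℕ) : ℝ) - 1)) := by
    rw [intervalIntegral.integral_of_le h12]
    refine setIntegral_congr_fun measurableSet_Ioc fun y hy => ?_
    rw [wfun_down hC (by omega) hy.1.le hy.2]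
    ring
  have e4 : ∫ y in Set.Ioi (Blev Cq (m + 2) (s + 2)), wfun Cq (m + 2) (s + 1) y * gpdf σ x y
      = 0 := by
    rw [setIntegral_congr_fun measurableSet_Ioi
      (fun y (hy : Blev Cq (m + 2) (s + 2) < y) => by
        rw [wfun_right hC (by omega) hy.le, zero_mul]), integral_zero]
  rw [e1, e2, e3, e4, zero_add, add_zero]

end QGaux

/-- For every `x ∈ [-C_q/2, C_q/2]` and every `r ∈ {0, …, k-1}`, the probability that
the output of the quantized Gaussian mechanism equals `B(r)` is the quantized-Gaussian
pmf value `P_x(r)`. -/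
theorem quantGauss_kernel_apply (Cq σ : ℝ) (hC : 0 < Cq) (hσ : 0 < σ)
    (k : ℕ) (hk : 2 ≤ k) (x : ℝ) (hx : x ∈ Set.Icc (-(Cq / 2)) (Cq / 2))
    (r : ℕ) (hr : r < k) :
    ((ProbabilityTheory.gaussianReal x (σ ^ 2).toNNReal).bind (qKernel Cq k))
        {Blev Cq k r}
      = ENNReal.ofReal (qgPmf Cq σ k x r) := by
  obtain ⟨m, rfl⟩ : ∃ m, k = m + 2 := ⟨k - 2, by omega⟩
  rw [QGaux.bind_eval hC hσ]
  congr 1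
  by_cases h0 : r = 0
  · subst h0
    exact QGaux.integral_case0 hC hσ x
  · by_cases hl : r = m + 1
    · subst hl
      exact QGaux.integral_case_last hC hσ x
    · obtain ⟨s, rfl⟩ : ∃ s, r = s + 1 := ⟨r - 1, by omega⟩
      exact QGaux.integral_case_mid hC hσ x (by omega)
end

section
/- For every x ∈ [−C_q/2, C_q/2] and every r ∈ {0,1,…,k−1}, the quantized-Gaussian pmf value is bounded below by the normalized end-cell mass at x = −C_q/2: P_x(r) ≥ (1/δ)·∫_{B(k−2)}^{B(k−1)} f_{−C_q/2}(t)·(t−B(k−2)) dt. -/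
open MeasureTheory Real

namespace QGAux

@[fun_prop]
lemma gpdf_cont (σ x : ℝ) : Continuous (gpdf σ x) := by
  unfold gpdf; fun_prop

lemma gpdf_nonneg {σ : ℝ} (hσ : 0 < σ) (x t : ℝ) : 0 ≤ gpdf σ x t := by
  have h1 : 0 < σ * Real.sqrt (2 * Real.pi) :=
    mul_pos hσ (Real.sqrt_pos.mpr (by positivity))
  exact mul_nonneg (by positivity) (Real.exp_nonneg _)

lemma gpdf_shift (σ x t : ℝ) : gpdf σ x t = gpdf σ 0 (t - x) := by
  unfold gpdf; ring_nf

lemma gpdf_even (σ t : ℝ) : gpdf σ 0 (-t) = gpdf σ 0 t := by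
  unfold gpdf; ring_nf

lemma gpdf_mono {σ : ℝ} (hσ : 0 < σ) {u v : ℝ} (hu : 0 ≤ u) (huv : u ≤ v) :
    gpdf σ 0 v ≤ gpdf σ 0 u := by
  unfold gpdf
  have h1 : 0 < σ * Real.sqrt (2 * Real.pi) :=
    mul_pos hσ (Real.sqrt_pos.mpr (by positivity))
  apply mul_le_mul_of_nonneg_left _ (by positivity)
  apply Real.exp_le_exp.mpr
  apply div_le_div_of_nonneg_right ?_ (by positivity)
  · nlinarith

lemma gpdf_integrable {σ : ℝ} (hσ : 0 < σ) : Integrable (gpdf σ 0) := by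
  have hb : (0:ℝ) < 1 / (2 * σ ^ 2) := by positivity
  have h := (integrable_exp_neg_mul_sq hb).const_mul (1 / (σ * Real.sqrt (2 * Real.pi)))
  refine h.congr (Filter.Eventually.of_forall fun t => ?_)
  show _ = gpdf σ 0 t
  unfold gpdf
  beta_reduce
  rw [show -(1 / (2 * σ ^ 2)) * t ^ 2 = -(t - 0) ^ 2 / (2 * σ ^ 2) by ring]

variable {σ : ℝ}

/-- primitive of the centered gaussian pdf -/
noncomputable def Phi (σ y : ℝ) : ℝ := ∫ t in (0:ℝ)..y, gpdf σ 0 t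

lemma intF (a b : ℝ) : IntervalIntegrable (gpdf σ 0) MeasureTheory.volume a b :=
  (gpdf_cont σ 0).intervalIntegrable a b

lemma Phi_hasDeriv (y : ℝ) : HasDerivAt (Phi σ) (gpdf σ 0 y) y :=
  intervalIntegral.integral_hasDerivAt_right (intF 0 y)
    ((gpdf_cont σ 0).stronglyMeasurableAtFilter _ _) (gpdf_cont σ 0).continuousAt

@[fun_prop]
lemma Phi_cont : Continuous (Phi σ) :=
  continuous_iff_continuousAt.mpr fun y => (Phi_hasDeriv y).continuousAt

lemma intPhi (a b : ℝ) : IntervalIntegrable (Phi σ) MeasureTheory.volume a b :=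
  Phi_cont.intervalIntegrable a b

lemma Phi_diff (a b : ℝ) : Phi σ b - Phi σ a = ∫ t in a..b, gpdf σ 0 t := by
  have h := intervalIntegral.integral_add_adjacent_intervals (intF (σ:=σ) 0 a) (intF a b)
  unfold Phi
  linarith

lemma I1 (a b : ℝ) :
    (∫ t in a..b, gpdf σ 0 t * (t - a)) = ∫ u in a..b, (Phi σ b - Phi σ u) := by
  have parts := intervalIntegral.integral_mul_deriv_eq_deriv_mul
    (u := fun t => t - a) (u' := fun _ => (1:ℝ)) (v := Phi σ) (v' := gpdf σ 0)
    (a := a) (b := b)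
    (fun t _ => (hasDerivAt_id t).sub_const a)
    (fun t _ => Phi_hasDeriv t)
    intervalIntegrable_const (intF a b)
  have h1 : (∫ t in a..b, gpdf σ 0 t * (t - a)) = ∫ t in a..b, (t - a) * gpdf σ 0 t := by
    apply intervalIntegral.integral_congr; intro t _; ring
  have h2 : (∫ u in a..b, (Phi σ b - Phi σ u))
      = (b - a) * Phi σ b - ∫ u in a..b, Phi σ u := by
    rw [intervalIntegral.integral_sub intervalIntegrable_const (intPhi a b),
      intervalIntegral.integral_const, smul_eq_mul]
  have h3 : (∫ u in a..b, (1:ℝ) * Phi σ u) = ∫ u in a..b, Phi σ u := by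
    apply intervalIntegral.integral_congr; intro t _; ring
  rw [h1, parts, h3, h2]
  ring

lemma I2 (a b : ℝ) :
    (∫ t in a..b, gpdf σ 0 t * (b - t)) = ∫ u in a..b, (Phi σ u - Phi σ a) := by
  have parts := intervalIntegral.integral_mul_deriv_eq_deriv_mul
    (u := fun t => b - t) (u' := fun _ => (-1:ℝ)) (v := Phi σ) (v' := gpdf σ 0)
    (a := a) (b := b)
    (fun t _ => ((hasDerivAt_id t).const_sub b))
    (fun t _ => Phi_hasDeriv t)
    intervalIntegrable_const (intF a b)
  have h1 : (∫ t in a..b, gpdf σ 0 t * (b - t)) = ∫ t in a..b, (b - t) * gpdf σ 0 t := by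
    apply intervalIntegral.integral_congr; intro t _; ring
  have h2 : (∫ u in a..b, (Phi σ u - Phi σ a))
      = (∫ u in a..b, Phi σ u) - (b - a) * Phi σ a := by
    rw [intervalIntegral.integral_sub (intPhi a b) intervalIntegrable_const,
      intervalIntegral.integral_const, smul_eq_mul]
  have h3 : (∫ u in a..b, (-1:ℝ) * Phi σ u) = - ∫ u in a..b, Phi σ u := by
    rw [← intervalIntegral.integral_neg]
    apply intervalIntegral.integral_congr; intro t _; ring
  rw [h1, parts, h3, h2]
  ring

lemma reflF (a b : ℝ) : (∫ t in a..b, gpdf σ 0 t) = ∫ t in (-b)..(-a), gpdf σ 0 t := by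
  rw [← intervalIntegral.integral_comp_neg (fun t => gpdf σ 0 t)]
  apply intervalIntegral.integral_congr
  intro t _
  exact (gpdf_even σ t).symm

lemma shiftmono (hσ : 0 < σ) {a d L : ℝ} (ha : 0 ≤ a) (hd : 0 ≤ d) (hL : 0 ≤ L) :
    (∫ t in (a+d)..(a+d+L), gpdf σ 0 t) ≤ ∫ t in a..(a+L), gpdf σ 0 t := by
  have h1 : (∫ t in (a+d)..(a+d+L), gpdf σ 0 t) = ∫ t in a..(a+L), gpdf σ 0 (t + d) := by
    rw [intervalIntegral.integral_comp_add_right (fun t => gpdf σ 0 t)]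
    congr 1 <;> ring
  rw [h1]
  apply intervalIntegral.integral_mono_on (by linarith) _ (intF a (a+L))
  · intro t ht
    exact gpdf_mono hσ (by linarith [ht.1]) (by linarith)
  · exact ((gpdf_cont σ 0).comp (continuous_id.add continuous_const)).intervalIntegrable _ _

lemma Fnonneg_interval (hσ : 0 < σ) {a b : ℝ} (hab : a ≤ b) :
    0 ≤ ∫ t in a..b, gpdf σ 0 t :=
  intervalIntegral.integral_nonneg hab (fun t _ => gpdf_nonneg hσ 0 t)

lemma winA (hσ : 0 < σ) {p1 p2 q1 q2 : ℝ} (hp1 : 0 ≤ p1) (hpq : p1 ≤ q1) (hq : q1 ≤ q2)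
    (hlen : q2 - q1 ≤ p2 - p1) :
    (∫ t in q1..q2, gpdf σ 0 t) ≤ ∫ t in p1..p2, gpdf σ 0 t := by
  have h1 : (∫ t in q1..q2, gpdf σ 0 t)
      = ∫ t in (p1 + (q1 - p1))..(p1 + (q1 - p1) + (q2 - q1)), gpdf σ 0 t := by
    congr 1 <;> ring
  rw [h1]
  calc _ ≤ ∫ t in p1..(p1 + (q2 - q1)), gpdf σ 0 t :=
        shiftmono hσ hp1 (by linarith) (by linarith)
    _ ≤ _ := intervalIntegral.integral_mono_interval le_rfl (by linarith) (by linarith)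
        (Filter.Eventually.of_forall fun t => gpdf_nonneg hσ 0 t) (intF p1 p2)

lemma win (hσ : 0 < σ) {p1 p2 q1 q2 : ℝ} (hq1 : 0 ≤ q1) (hq : q1 ≤ q2)
    (hlen : q2 - q1 ≤ p2 - p1) (h1 : p1 ≤ q1) (h2 : -p2 ≤ q1) :
    (∫ t in q1..q2, gpdf σ 0 t) ≤ ∫ t in p1..p2, gpdf σ 0 t := by
  rcases le_or_gt 0 p1 with hp1 | hp1
  · exact winA hσ hp1 h1 hq hlen
  rcases le_or_gt p2 0 with hp2 | hp2
  · rw [reflF p1 p2]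
    exact winA hσ (by linarith) h2 hq (by linarith)
  -- p1 < 0 < p2
  have hsplit : (∫ t in p1..(0:ℝ), gpdf σ 0 t) + (∫ t in (0:ℝ)..p2, gpdf σ 0 t)
      = ∫ t in p1..p2, gpdf σ 0 t :=
    intervalIntegral.integral_add_adjacent_intervals (intF p1 0) (intF 0 p2)
  set L := q2 - q1 with hL
  have hstep1 : (∫ t in q1..q2, gpdf σ 0 t) ≤ ∫ t in (0:ℝ)..L, gpdf σ 0 t := by
    have := shiftmono hσ (le_refl (0:ℝ)) hq1 (by linarith : (0:ℝ) ≤ L)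
    calc (∫ t in q1..q2, gpdf σ 0 t) = ∫ t in (0 + q1)..(0 + q1 + L), gpdf σ 0 t := by
          congr 1 <;> ring
      _ ≤ ∫ t in (0:ℝ)..(0 + L), gpdf σ 0 t := this
      _ = _ := by norm_num
  rcases le_or_gt L p2 with hcase | hcase
  · calc (∫ t in q1..q2, gpdf σ 0 t) ≤ ∫ t in (0:ℝ)..L, gpdf σ 0 t := hstep1
      _ ≤ ∫ t in (0:ℝ)..p2, gpdf σ 0 t := intervalIntegral.integral_mono_interval le_rfl
          (by linarith) hcase (Filter.Eventually.of_forall fun t => gpdf_nonneg hσ 0 t)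
          (intF 0 p2)
      _ ≤ _ := by
        rw [← hsplit]
        have : 0 ≤ ∫ t in p1..(0:ℝ), gpdf σ 0 t := Fnonneg_interval hσ hp1.le
        linarith
  · have hs2 : (∫ t in (0:ℝ)..p2, gpdf σ 0 t) + (∫ t in p2..L, gpdf σ 0 t)
        = ∫ t in (0:ℝ)..L, gpdf σ 0 t :=
      intervalIntegral.integral_add_adjacent_intervals (intF 0 p2) (intF p2 L)
    have hs3 : (∫ t in p2..L, gpdf σ 0 t) ≤ ∫ t in p1..(0:ℝ), gpdf σ 0 t := by
      have hr : (∫ t in p1..(0:ℝ), gpdf σ 0 t) = ∫ t in (0:ℝ)..(-p1), gpdf σ 0 t := by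
        rw [reflF]; norm_num
      have hsm : (∫ t in p2..L, gpdf σ 0 t) ≤ ∫ t in (0:ℝ)..(L - p2), gpdf σ 0 t := by
        have := shiftmono hσ (le_refl (0:ℝ)) hp2.le (by linarith : (0:ℝ) ≤ L - p2)
        calc (∫ t in p2..L, gpdf σ 0 t) = ∫ t in (0 + p2)..(0 + p2 + (L - p2)), gpdf σ 0 t := by
              congr 1 <;> ring
          _ ≤ ∫ t in (0:ℝ)..(0 + (L - p2)), gpdf σ 0 t := this
          _ = _ := by norm_num
      have hmono : (∫ t in (0:ℝ)..(L - p2), gpdf σ 0 t) ≤ ∫ t in (0:ℝ)..(-p1), gpdf σ 0 t :=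
        intervalIntegral.integral_mono_interval le_rfl (by linarith) (by linarith)
          (Filter.Eventually.of_forall fun t => gpdf_nonneg hσ 0 t) (intF 0 (-p1))
      rw [hr]; linarith
    linarith

lemma tailmerge (hσ : 0 < σ) {p p' : ℝ} (hpp : p ≤ p') :
    (∫ t in Set.Ici p, gpdf σ 0 t) = (∫ t in p..p', gpdf σ 0 t) + ∫ t in Set.Ici p', gpdf σ 0 t := by
  rw [MeasureTheory.integral_Ici_eq_integral_Ioi, MeasureTheory.integral_Ici_eq_integral_Ioi,
    intervalIntegral.integral_of_le hpp, ← Set.Ioc_union_Ioi_eq_Ioi hpp,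
    MeasureTheory.setIntegral_union Set.Ioc_disjoint_Ioi_same measurableSet_Ioi
      ((gpdf_integrable hσ).integrableOn) ((gpdf_integrable hσ).integrableOn)]

lemma tailbound (hσ : 0 < σ) {p q1 q2 : ℝ} (h1 : p ≤ q1) (h12 : q1 ≤ q2) :
    (∫ t in q1..q2, gpdf σ 0 t) ≤ ∫ t in Set.Ici p, gpdf σ 0 t := by
  rw [intervalIntegral.integral_of_le h12]
  apply MeasureTheory.setIntegral_mono_set ((gpdf_integrable hσ).integrableOn)
    (Filter.Eventually.of_forall fun t => gpdf_nonneg hσ 0 t)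
  apply HasSubset.Subset.eventuallyLE
  intro t ht
  exact le_trans h1 (le_of_lt ht.1)

lemma endcase (hσ : 0 < σ) {δ q0 e : ℝ} (hδ : 0 ≤ δ) (he : e ≤ q0) :
    (∫ t in q0..(q0+δ), gpdf σ 0 t * (t - q0))
      ≤ (∫ t in e..(e+δ), gpdf σ 0 t * (t - e)) + δ * ∫ t in Set.Ici (e+δ), gpdf σ 0 t := by
  rw [I1, I1]
  have hL : (∫ u in q0..(q0+δ), (Phi σ (q0+δ) - Phi σ u))
      = ∫ u in (0:ℝ)..δ, (Phi σ (q0+δ) - Phi σ (u + q0)) := by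
    rw [intervalIntegral.integral_comp_add_right (fun u => Phi σ (q0+δ) - Phi σ u) q0]
    congr 1 <;> ring
  have hR : (∫ u in e..(e+δ), (Phi σ (e+δ) - Phi σ u))
      = ∫ u in (0:ℝ)..δ, (Phi σ (e+δ) - Phi σ (u + e)) := by
    rw [intervalIntegral.integral_comp_add_right (fun u => Phi σ (e+δ) - Phi σ u) e]
    congr 1 <;> ring
  have hC : δ * (∫ t in Set.Ici (e+δ), gpdf σ 0 t)
      = ∫ u in (0:ℝ)..δ, (∫ t in Set.Ici (e+δ), gpdf σ 0 t) := by
    rw [intervalIntegral.integral_const, smul_eq_mul, sub_zero]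
  rw [hL, hR, hC, ← intervalIntegral.integral_add ((by fun_prop : Continuous _).intervalIntegrable _ _) intervalIntegrable_const]
  apply intervalIntegral.integral_mono_on hδ ((by fun_prop : Continuous _).intervalIntegrable _ _) ((by fun_prop : Continuous _).intervalIntegrable _ _)
  intro u hu
  have key : (∫ t in (q0+u)..(q0+δ), gpdf σ 0 t)
      ≤ (∫ t in (e+u)..(e+δ), gpdf σ 0 t) + ∫ t in Set.Ici (e+δ), gpdf σ 0 t := by
    rw [← tailmerge hσ (by linarith [hu.2] : e + u ≤ e + δ)]
    exact tailbound hσ (by linarith) (by linarith [hu.2])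
  have e1 : Phi σ (q0+δ) - Phi σ (u + q0) = ∫ t in (q0+u)..(q0+δ), gpdf σ 0 t := by
    rw [← Phi_diff]; ring_nf
  have e2 : Phi σ (e+δ) - Phi σ (u + e) = ∫ t in (e+u)..(e+δ), gpdf σ 0 t := by
    rw [← Phi_diff]; ring_nf
  rw [e1, e2]
  exact key

lemma midcase (hσ : 0 < σ) {δ q0 c : ℝ} (hδ : 0 ≤ δ) (hq0 : 0 ≤ q0)
    (hc1 : -q0 ≤ c) (hc2 : c ≤ q0) :
    (∫ t in q0..(q0+δ), gpdf σ 0 t * (t - q0))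
      ≤ (∫ t in (c-δ)..c, gpdf σ 0 t * (t - (c-δ)))
        + ∫ t in c..(c+δ), gpdf σ 0 t * ((c+δ) - t) := by
  rw [I1, I1, I2]
  have hL : (∫ u in q0..(q0+δ), (Phi σ (q0+δ) - Phi σ u))
      = ∫ u in (0:ℝ)..δ, (Phi σ (q0+δ) - Phi σ (u + q0)) := by
    rw [intervalIntegral.integral_comp_add_right (fun u => Phi σ (q0+δ) - Phi σ u) q0]
    congr 1 <;> ring
  have hR1 : (∫ u in (c-δ)..c, (Phi σ c - Phi σ u))
      = ∫ u in (0:ℝ)..δ, (Phi σ c - Phi σ (u + (c - δ))) := by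
    rw [intervalIntegral.integral_comp_add_right (fun u => Phi σ c - Phi σ u) (c - δ)]
    congr 1 <;> ring
  have hR2 : (∫ u in c..(c+δ), (Phi σ u - Phi σ c))
      = ∫ u in (0:ℝ)..δ, (Phi σ (u + (c - δ) + δ) - Phi σ c) := by
    rw [intervalIntegral.integral_comp_add_right (fun u => Phi σ (u + δ) - Phi σ c) (c - δ),
      intervalIntegral.integral_comp_add_right (fun u => Phi σ u - Phi σ c) δ]
    congr 1 <;> ring
  rw [hL, hR1, hR2, ← intervalIntegral.integral_add ((by fun_prop : Continuous _).intervalIntegrable _ _) ((by fun_prop : Continuous _).intervalIntegrable _ _)]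
  apply intervalIntegral.integral_mono_on hδ ((by fun_prop : Continuous _).intervalIntegrable _ _) ((by fun_prop : Continuous _).intervalIntegrable _ _)
  intro u hu
  have e1 : Phi σ (q0+δ) - Phi σ (u + q0) = ∫ t in (u+q0)..(q0+δ), gpdf σ 0 t := Phi_diff _ _
  have e2 : Phi σ c - Phi σ (u + (c - δ)) + (Phi σ (u + (c - δ) + δ) - Phi σ c)
      = ∫ t in (u + (c-δ))..(u + (c-δ) + δ), gpdf σ 0 t := by
    rw [← Phi_diff]; ring
  obtain ⟨hu1, hu2⟩ := hu
  rw [e1, e2]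
  exact win hσ (by linarith) (by linarith) (by linarith) (by linarith) (by linarith)

lemma integral_Ioi_comp_sub (g : ℝ → ℝ) (a b : ℝ) :
    (∫ t in Set.Ioi b, g (t - a)) = ∫ t in Set.Ioi (b - a), g t := by
  have A : MeasurableEmbedding (fun t : ℝ => t - a) :=
    (Homeomorph.subRight a).isClosedEmbedding.measurableEmbedding
  have h := A.setIntegral_map (μ := MeasureTheory.volume) g (Set.Ioi (b - a))
  have hmap : MeasureTheory.Measure.map (fun t : ℝ => t - a) MeasureTheory.volume
      = MeasureTheory.volume := by
    simp_rw [sub_eq_add_neg]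
    exact MeasureTheory.map_add_right_eq_self MeasureTheory.volume (-a)
  rw [hmap] at h
  have hpre : (fun t : ℝ => t - a) ⁻¹' Set.Ioi (b - a) = Set.Ioi b := by
    ext t; simp [sub_lt_sub_iff_right]
  rw [hpre] at h
  exact h.symm

/-- tail of the translated gaussian: `∫_{Ici B} gpdf σ x = ∫_{Ici (B - x)} gpdf σ 0`. -/
lemma tail_shift (x B : ℝ) :
    (∫ t in Set.Ici B, gpdf σ x t) = ∫ t in Set.Ici (B - x), gpdf σ 0 t := by
  rw [MeasureTheory.integral_Ici_eq_integral_Ioi, MeasureTheory.integral_Ici_eq_integral_Ioi]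
  rw [show (∫ t in Set.Ioi B, gpdf σ x t) = ∫ t in Set.Ioi B, gpdf σ 0 (t - x) from
    MeasureTheory.setIntegral_congr_fun measurableSet_Ioi fun t _ => gpdf_shift σ x t]
  exact integral_Ioi_comp_sub (gpdf σ 0) x B

/-- head of the translated gaussian reflected to a tail. -/
lemma head_shift (x B : ℝ) :
    (∫ t in Set.Iic B, gpdf σ x t) = ∫ t in Set.Ici ((-B) - (-x)), gpdf σ 0 t := by
  have h1 : (∫ t in Set.Iic B, gpdf σ x t)
      = ∫ t in Set.Iic B, (fun s => gpdf σ 0 (x + s)) (-t) := by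
    apply MeasureTheory.setIntegral_congr_fun measurableSet_Iic
    intro t _
    simp only
    rw [gpdf_shift σ x t, show x + -t = -(t - x) by ring, gpdf_even]
  rw [h1]
  refine Eq.trans (_root_.integral_comp_neg_Iic B fun s => gpdf σ 0 (x + s)) ?_
  rw [MeasureTheory.integral_Ici_eq_integral_Ioi]
  rw [show (∫ t in Set.Ioi (-B), gpdf σ 0 (x + t)) = ∫ t in Set.Ioi (-B), gpdf σ 0 (t - (-x))
    from MeasureTheory.setIntegral_congr_fun measurableSet_Ioi fun t _ => by ring_nf]
  exact integral_Ioi_comp_sub (gpdf σ 0) (-x) (-B)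

/-- left-weighted cell integral, translated to the centered gaussian. -/
lemma cellshift (x a b : ℝ) :
    (∫ t in a..b, gpdf σ x t * (t - a)) = ∫ s in (a-x)..(b-x), gpdf σ 0 s * (s - (a - x)) := by
  rw [← intervalIntegral.integral_comp_sub_right (fun s => gpdf σ 0 s * (s - (a - x))) x]
  apply intervalIntegral.integral_congr
  intro t _
  beta_reduce
  rw [gpdf_shift σ x t]
  ring

/-- right-weighted cell integral, translated to the centered gaussian. -/
lemma cellshiftR (x a b : ℝ) :
    (∫ t in a..b, gpdf σ x t * (b - t)) = ∫ s in (a-x)..(b-x), gpdf σ 0 s * ((b - x) - s) := by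
  rw [← intervalIntegral.integral_comp_sub_right (fun s => gpdf σ 0 s * ((b - x) - s)) x]
  apply intervalIntegral.integral_congr
  intro t _
  beta_reduce
  rw [gpdf_shift σ x t]
  ring

/-- right-weighted cell integral, reflected to a left-weighted one. -/
lemma cellrefl (x a b : ℝ) :
    (∫ t in a..b, gpdf σ x t * (b - t)) = ∫ s in (-b)..(-a), gpdf σ (-x) s * (s - (-b)) := by
  rw [← intervalIntegral.integral_comp_neg (fun s => gpdf σ (-x) s * (s - (-b)))]
  apply intervalIntegral.integral_congr
  intro t _
  beta_reduce
  rw [gpdf_shift σ x t, gpdf_shift σ (-x) (-t), show -t - -x = -(t - x) by ring, gpdf_even]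
  ring

lemma arithEnd {d X A C : ℝ} (hd : 0 < d) (h : X ≤ A + d * C) : (1/d) * X ≤ A / d + C := by
  have h2 : (1/d) * X ≤ (1/d) * (A + d * C) :=
    mul_le_mul_of_nonneg_left h (le_of_lt (one_div_pos.mpr hd))
  have h3 : (1/d) * (A + d * C) = A / d + C := by
    field_simp
  linarith

lemma arithMid {d X A B : ℝ} (hd : 0 < d) (h : X ≤ A + B) : (1/d) * X ≤ A / d + B / d := by
  have h2 : (1/d) * X ≤ (1/d) * (A + B) :=
    mul_le_mul_of_nonneg_left h (le_of_lt (one_div_pos.mpr hd))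
  have h3 : (1/d) * (A + B) = A / d + B / d := by
    field_simp
  linarith

end QGAux

open QGAux in
/-- For every `x ∈ [-C_q/2, C_q/2]` and every `r ∈ {0, …, k-1}`, the quantized-Gaussian
pmf value is bounded below by the normalized end-cell mass at the input `-C_q/2`. -/
theorem quantGauss_pmf_lower_bound (Cq σ : ℝ) (hC : 0 < Cq) (hσ : 0 < σ)
    (k : ℕ) (hk : 2 ≤ k) (x : ℝ) (hx : x ∈ Set.Icc (-(Cq / 2)) (Cq / 2))
    (r : ℕ) (hr : r < k) :
    qgPmf Cq σ k x r ≥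
      (1 / (2 * Cq / ((k : ℝ) - 1))) *
        ∫ t in (Blev Cq k (k - 2))..(Blev Cq k (k - 1)),
          gpdf σ (-(Cq / 2)) t * (t - Blev Cq k (k - 2)) := by
  obtain ⟨hx1, hx2⟩ := hx
  have hk2 : (2:ℝ) ≤ (k:ℝ) := by exact_mod_cast hk
  have hkne : ((k:ℝ) - 1) ≠ 0 := by linarith
  rw [ge_iff_le]
  set d : ℝ := 2 * Cq / ((k:ℝ) - 1) with hdEq
  have hdpos : 0 < d := div_pos (by linarith) (by linarith)
  have hdk : ((k:ℝ) - 1) * d = 2 * Cq := by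
    rw [hdEq]; field_simp
  have hBk1 : Blev Cq k (k-1) = Cq := by
    unfold Blev
    rw [Nat.cast_sub (by omega : 1 ≤ k), ← hdEq]
    push_cast
    nlinarith [hdk]
  have hBk2 : Blev Cq k (k-2) = Cq - d := by
    unfold Blev
    rw [Nat.cast_sub (by omega : 2 ≤ k), ← hdEq]
    push_cast
    nlinarith [hdk]
  set q0 : ℝ := 3 * Cq / 2 - d with hq0Eq
  rw [hBk1, hBk2]
  rw [QGAux.cellshift (-(Cq/2)) (Cq - d) Cq]
  rw [show Cq - d - -(Cq/2) = q0 by rw [hq0Eq]; ring,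
      show Cq - -(Cq/2) = q0 + d by rw [hq0Eq]; ring]
  by_cases hr0 : r = 0
  · subst hr0
    unfold qgPmf
    rw [if_pos rfl]
    have hB0 : Blev Cq k 0 = -Cq := by unfold Blev; push_cast; ring
    have hB1 : Blev Cq k 1 = -Cq + d := by
      unfold Blev; rw [← hdEq]; push_cast; ring
    rw [hB0, hB1, ← hdEq]
    set e : ℝ := Cq - d + x with heEq
    rw [intervalIntegral.integral_div, QGAux.cellrefl x (-Cq) (-Cq + d),
      QGAux.cellshift (-x) (-(-Cq + d)) (-(-Cq)), QGAux.head_shift x (-Cq)]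
    rw [show -(-Cq + d) - -x = e by rw [heEq]; ring,
        show -(-Cq) - -x = e + d by rw [heEq]; ring]
    have key := QGAux.endcase hσ (δ := d) (q0 := q0) (e := e) hdpos.le
      (by rw [heEq, hq0Eq]; linarith)
    have := QGAux.arithEnd hdpos key
    linarith
  by_cases hrk : r = k - 1
  · subst hrk
    unfold qgPmf
    rw [if_neg hr0, if_pos rfl, hBk1, hBk2, ← hdEq]
    set e : ℝ := Cq - d - x with heEq
    rw [intervalIntegral.integral_div, QGAux.cellshift x (Cq - d) Cq,
      QGAux.tail_shift x Cq]
    rw [show Cq - d - x = e by rw [heEq],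
        show Cq - x = e + d by rw [heEq]; ring]
    have key := QGAux.endcase hσ (δ := d) (q0 := q0) (e := e) hdpos.le
      (by rw [heEq, hq0Eq]; linarith)
    have := QGAux.arithEnd hdpos key
    linarith
  · -- middle cell
    obtain ⟨m, rfl⟩ : ∃ m, r = m + 1 := ⟨r - 1, by omega⟩
    have hm3 : m + 3 ≤ k := by omega
    have hm3R : ((m:ℝ) + 3) ≤ (k:ℝ) := by exact_mod_cast hm3
    have hd3 : d ≤ Cq := by nlinarith [hdk, hdpos]
    unfold qgPmf
    rw [if_neg hr0, if_neg hrk]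
    set c : ℝ := -Cq + ((m:ℝ) + 1) * d - x with hcEq
    have hBm : Blev Cq k (m + 1 - 1) = (c + x) - d := by
      simp only [Nat.add_sub_cancel]
      unfold Blev; rw [← hdEq, hcEq]; push_cast; ring
    have hBm1 : Blev Cq k (m + 1) = c + x := by
      unfold Blev; rw [← hdEq, hcEq]; push_cast; ring
    have hBm2 : Blev Cq k (m + 1 + 1) = (c + x) + d := by
      unfold Blev; rw [← hdEq, hcEq]; push_cast; ring
    rw [hBm, hBm1, hBm2, ← hdEq]
    rw [intervalIntegral.integral_div, intervalIntegral.integral_div,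
      QGAux.cellshift x ((c + x) - d) (c + x), QGAux.cellshiftR x (c + x) ((c + x) + d)]
    rw [show (c + x) - d - x = c - d by ring, show (c + x) - x = c by ring,
        show (c + x) + d - x = c + d by ring]
    have key := QGAux.midcase hσ (δ := d) (q0 := q0) (c := c) hdpos.le
      (by rw [hq0Eq]; linarith)
      (by rw [hcEq, hq0Eq]; nlinarith [hdpos.le, Nat.cast_nonneg (α := ℝ) m])
      (by rw [hcEq, hq0Eq]; nlinarith [hdpos.le, hdk,
        (by linarith : ((m:ℝ) + 2) ≤ (k:ℝ) - 1)])
    have := QGAux.arithMid hdpos key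
    linarith
end

section
/- (Theorem 2, case α = ∞.) For all x, x' ∈ [−C_q/2, C_q/2] and every r ∈ {0,1,…,k−1}, the likelihood ratio of the quantized-Gaussian pmfs satisfies log(P_x(r)/P_{x'}(r)) ≤ log( δ / ∫_{B(k−2)}^{B(k−1)} f_{−C_q/2}(t)·(t−B(k−2)) dt ); equivalently, P_x(r) ≤ (δ / ∫_{B(k−2)}^{B(k−1)} f_{−C_q/2}(t)·(t−B(k−2)) dt)·P_{x'}(r). -/
open MeasureTheory Real

lemma continuous_gpdf (σ x : ℝ) : Continuous (gpdf σ x) := by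
  unfold gpdf
  fun_prop

lemma gpdf_nonneg {σ : ℝ} (hσ : 0 < σ) (x t : ℝ) : 0 ≤ gpdf σ x t := by
  unfold gpdf
  have := Real.pi_pos
  positivity

lemma gpdf_pos {σ : ℝ} (hσ : 0 < σ) (x t : ℝ) : 0 < gpdf σ x t := by
  unfold gpdf
  have := Real.pi_pos
  positivity

lemma gpdf_sub (σ x t : ℝ) : gpdf σ x t = gpdf σ 0 (t - x) := by
  simp [gpdf]

lemma gpdf_even (σ t : ℝ) : gpdf σ 0 (-t) = gpdf σ 0 t := by
  simp [gpdf]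

lemma gpdf_anti {σ : ℝ} (hσ : 0 < σ) {s t : ℝ} (h : |s| ≤ |t|) :
    gpdf σ 0 t ≤ gpdf σ 0 s := by
  unfold gpdf
  have hc : 0 < 1 / (σ * Real.sqrt (2 * Real.pi)) := by
    have := Real.pi_pos
    positivity
  apply mul_le_mul_of_nonneg_left _ hc.le
  apply Real.exp_le_exp.2
  apply div_le_div_of_nonneg_right ?_ (by positivity)
  have hs : s ^ 2 ≤ t ^ 2 := by
    rw [← sq_abs s, ← sq_abs t]
    exact pow_le_pow_left₀ (abs_nonneg s) h 2
  simp only [sub_zero]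
  linarith

lemma gpdf_eq_gaussianPDFReal {σ : ℝ} (hσ : 0 < σ) (x : ℝ) :
    gpdf σ x = ProbabilityTheory.gaussianPDFReal x ⟨σ ^ 2, sq_nonneg σ⟩ := by
  ext t
  unfold gpdf ProbabilityTheory.gaussianPDFReal
  have : Real.sqrt (2 * Real.pi * σ ^ 2) = σ * Real.sqrt (2 * Real.pi) := by
    rw [Real.sqrt_mul (by positivity), Real.sqrt_sq hσ.le, mul_comm]
  show (1 / (σ * Real.sqrt (2 * Real.pi))) * Real.exp (-(t - x) ^ 2 / (2 * σ ^ 2)) = (Real.sqrt (2 * Real.pi * σ ^ 2))⁻¹ * Real.exp (-(t - x) ^ 2 / (2 * σ ^ 2))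
  rw [this]
  rw [one_div]

lemma integrable_gpdf {σ : ℝ} (hσ : 0 < σ) (x : ℝ) : Integrable (gpdf σ x) := by
  rw [gpdf_eq_gaussianPDFReal hσ]
  exact ProbabilityTheory.integrable_gaussianPDFReal _ _

lemma integral_gpdf {σ : ℝ} (hσ : 0 < σ) (x : ℝ) : ∫ t, gpdf σ x t = 1 := by
  rw [gpdf_eq_gaussianPDFReal hσ]
  exact ProbabilityTheory.integral_gaussianPDFReal_eq_one x
    (by intro h; have h' := congrArg (fun v : NNReal => (v : ℝ)) h; change σ ^ 2 = 0 at h'; exact pow_ne_zero 2 hσ.ne' h')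

noncomputable def Phi (σ a : ℝ) : ℝ := ∫ t in (0:ℝ)..a, gpdf σ 0 t
noncomputable def Phi1 (σ a : ℝ) : ℝ := ∫ t in (0:ℝ)..a, t * gpdf σ 0 t

lemma hasDerivAt_Phi (σ a : ℝ) : HasDerivAt (Phi σ) (gpdf σ 0 a) a :=
  intervalIntegral.integral_hasDerivAt_right
    ((continuous_gpdf σ 0).intervalIntegrable _ _)
    ((continuous_gpdf σ 0).stronglyMeasurableAtFilter _ _)
    (continuous_gpdf σ 0).continuousAt

lemma hasDerivAt_Phi1 (σ a : ℝ) : HasDerivAt (Phi1 σ) (a * gpdf σ 0 a) a := by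
  have hc : Continuous (fun t : ℝ => t * gpdf σ 0 t) := by
    have := continuous_gpdf σ 0; fun_prop
  exact intervalIntegral.integral_hasDerivAt_right
    (hc.intervalIntegrable _ _) (hc.stronglyMeasurableAtFilter _ _) hc.continuousAt

lemma Phi_neg (σ a : ℝ) : Phi σ (-a) = -Phi σ a := by
  have h := intervalIntegral.integral_comp_neg (a := a) (b := 0) (f := gpdf σ 0)
  simp only [neg_zero] at h
  unfold Phi
  rw [← h]
  simp_rw [gpdf_even]
  rw [intervalIntegral.integral_symm]

lemma Phi1_neg (σ a : ℝ) : Phi1 σ (-a) = Phi1 σ a := by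
  have h := intervalIntegral.integral_comp_neg (a := a) (b := 0)
    (f := fun t => t * gpdf σ 0 t)
  simp only [neg_zero] at h
  unfold Phi1
  rw [← h]
  simp_rw [gpdf_even, neg_mul]
  rw [intervalIntegral.integral_neg, intervalIntegral.integral_symm, neg_neg]

lemma interval_Phi (σ a b : ℝ) : ∫ t in a..b, gpdf σ 0 t = Phi σ b - Phi σ a := by
  unfold Phi
  rw [← intervalIntegral.integral_interval_sub_left
    ((continuous_gpdf σ 0).intervalIntegrable _ _)
    ((continuous_gpdf σ 0).intervalIntegrable _ _)]

lemma continuous_idg (σ : ℝ) : Continuous (fun t : ℝ => t * gpdf σ 0 t) := by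
  have := continuous_gpdf σ 0
  fun_prop

lemma interval_Phi1 (σ a b : ℝ) :
    ∫ t in a..b, t * gpdf σ 0 t = Phi1 σ b - Phi1 σ a := by
  unfold Phi1
  rw [← intervalIntegral.integral_interval_sub_left
    ((continuous_idg σ).intervalIntegrable _ _)
    ((continuous_idg σ).intervalIntegrable _ _)]

lemma Jf_eq (σ m c d : ℝ) :
    ∫ t in c..(c+d), gpdf σ m t * (t - c) =
      (Phi1 σ (c-m+d) - Phi1 σ (c-m)) - (c-m) * (Phi σ (c-m+d) - Phi σ (c-m)) := by
  have h1 : ∀ t ∈ Set.uIcc c (c+d), gpdf σ m t * (t - c)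
      = (fun u => gpdf σ 0 u * (u - (c-m))) (t - m) := by
    intro t _
    simp only [gpdf_sub σ m t]
    ring_nf
  rw [intervalIntegral.integral_congr h1,
    intervalIntegral.integral_comp_sub_right (fun u => gpdf σ 0 u * (u - (c-m))) m]
  have h2 : ∀ x ∈ Set.uIcc (c-m) (c+d-m), gpdf σ 0 x * (x - (c-m))
      = (fun x => x * gpdf σ 0 x - (c-m) * gpdf σ 0 x) x := by
    intro x _; simp only; ring
  rw [intervalIntegral.integral_congr h2,
    intervalIntegral.integral_sub (g := fun x => (c-m) * gpdf σ 0 x)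
      ((continuous_idg σ).intervalIntegrable _ _)
      ((continuous_const.mul (continuous_gpdf σ 0)).intervalIntegrable _ _),
    intervalIntegral.integral_const_mul, interval_Phi, interval_Phi1,
    show c + d - m = c - m + d by ring]

lemma Kf_eq (σ m c d : ℝ) :
    ∫ t in c..(c+d), gpdf σ m t * (c + d - t) =
      (c-m+d) * (Phi σ (c-m+d) - Phi σ (c-m)) - (Phi1 σ (c-m+d) - Phi1 σ (c-m)) := by
  have h1 : ∀ t ∈ Set.uIcc c (c+d), gpdf σ m t * (c + d - t)
      = (fun u => gpdf σ 0 u * ((c-m+d) - u)) (t - m) := by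
    intro t _
    simp only [gpdf_sub σ m t]
    ring_nf
  rw [intervalIntegral.integral_congr h1,
    intervalIntegral.integral_comp_sub_right (fun u => gpdf σ 0 u * ((c-m+d) - u)) m]
  have h2 : ∀ x ∈ Set.uIcc (c-m) (c+d-m), gpdf σ 0 x * ((c-m+d) - x)
      = (fun x => (c-m+d) * gpdf σ 0 x - x * gpdf σ 0 x) x := by
    intro x _; simp only; ring
  rw [intervalIntegral.integral_congr h2,
    intervalIntegral.integral_sub (f := fun x => (c-m+d) * gpdf σ 0 x)
      ((continuous_const.mul (continuous_gpdf σ 0)).intervalIntegrable _ _)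
      ((continuous_idg σ).intervalIntegrable _ _),
    intervalIntegral.integral_const_mul, interval_Phi, interval_Phi1,
    show c + d - m = c - m + d by ring]

noncomputable def Tt (σ d a : ℝ) : ℝ :=
  ((Phi1 σ (-a) - Phi1 σ (-a-d)) - (-a-d) * (Phi σ (-a) - Phi σ (-a-d)))
  + ((-a+d) * (Phi σ (-a+d) - Phi σ (-a)) - (Phi1 σ (-a+d) - Phi1 σ (-a)))

lemma Tt_eq (σ m c d : ℝ) :
    Tt σ d (m - c) = (∫ t in (c-d)..c, gpdf σ m t * (t - (c-d)))
      + ∫ t in c..(c+d), gpdf σ m t * (c + d - t) := by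
  have h1 : (∫ t in (c-d)..c, gpdf σ m t * (t - (c-d)))
      = ∫ t in (c-d)..((c-d)+d), gpdf σ m t * (t - (c-d)) := by
    rw [show (c-d)+d = c by ring]
  rw [h1, Jf_eq, Kf_eq]
  unfold Tt
  rw [show -(m-c)-d = c-d-m by ring, show -(m-c) = c-m by ring,
    show c-d-m+d = c-m by ring, show c-m+d = c+d-m by ring]
  try ring

lemma Tt_even (σ d a : ℝ) : Tt σ d (-a) = Tt σ d a := by
  unfold Tt
  simp only [neg_neg]
  have p1 : Phi σ a = -Phi σ (-a) := by rw [Phi_neg]; ring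
  have p2 : Phi σ (a-d) = -Phi σ (-a+d) := by
    rw [show -a+d = -(a-d) by ring, Phi_neg]; ring
  have p3 : Phi σ (a+d) = -Phi σ (-a-d) := by
    rw [show -a-d = -(a+d) by ring, Phi_neg]; ring
  have q1 : Phi1 σ a = Phi1 σ (-a) := by rw [Phi1_neg]
  have q2 : Phi1 σ (a-d) = Phi1 σ (-a+d) := by
    rw [show -a+d = -(a-d) by ring, Phi1_neg]
  have q3 : Phi1 σ (a+d) = Phi1 σ (-a-d) := by
    rw [show -a-d = -(a+d) by ring, Phi1_neg]
  rw [p1, p2, p3, q1, q2, q3]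
  ring

lemma hasDerivAt_Tt (σ d a : ℝ) :
    HasDerivAt (Tt σ d) (2 * Phi σ (-a) - Phi σ (-a-d) - Phi σ (-a+d)) a := by
  have h1 : HasDerivAt (fun x : ℝ => -x) (-1) a := (hasDerivAt_id a).neg
  have h2 : HasDerivAt (fun x : ℝ => -x - d) (-1) a := h1.sub_const d
  have h3 : HasDerivAt (fun x : ℝ => -x + d) (-1) a := h1.add_const d
  have hP1 : HasDerivAt (fun x : ℝ => Phi σ (-x)) (gpdf σ 0 (-a) * (-1)) a :=
    (hasDerivAt_Phi σ (-a)).comp a h1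
  have hP2 : HasDerivAt (fun x : ℝ => Phi σ (-x-d)) (gpdf σ 0 (-a-d) * (-1)) a :=
    by have := (hasDerivAt_Phi σ (-a-d)).comp a h2; exact this
  have hP3 : HasDerivAt (fun x : ℝ => Phi σ (-x+d)) (gpdf σ 0 (-a+d) * (-1)) a :=
    by have := (hasDerivAt_Phi σ (-a+d)).comp a h3; exact this
  have hQ1 : HasDerivAt (fun x : ℝ => Phi1 σ (-x)) ((-a) * gpdf σ 0 (-a) * (-1)) a :=
    (hasDerivAt_Phi1 σ (-a)).comp a h1
  have hQ2 : HasDerivAt (fun x : ℝ => Phi1 σ (-x-d)) ((-a-d) * gpdf σ 0 (-a-d) * (-1)) a :=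
    by have := (hasDerivAt_Phi1 σ (-a-d)).comp a h2; exact this
  have hQ3 : HasDerivAt (fun x : ℝ => Phi1 σ (-x+d)) ((-a+d) * gpdf σ 0 (-a+d) * (-1)) a :=
    by have := (hasDerivAt_Phi1 σ (-a+d)).comp a h3; exact this
  have H := ((hQ1.sub hQ2).sub (h2.mul (hP1.sub hP2))).add
    ((h3.mul (hP3.sub hP1)).sub (hQ3.sub hQ1))
  refine H.congr_deriv ?_
  simp only [Pi.sub_apply]
  ring

lemma Tt_deriv_nonpos {σ d a : ℝ} (hσ : 0 < σ) (hd : 0 ≤ d) (ha : 0 ≤ a) :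
    2 * Phi σ (-a) - Phi σ (-a-d) - Phi σ (-a+d) ≤ 0 := by
  have e1 : (∫ t in (-a-d)..(-a), gpdf σ 0 t) = Phi σ (-a) - Phi σ (-a-d) :=
    interval_Phi σ _ _
  have e2 : (∫ t in (-a)..(-a+d), gpdf σ 0 t) = Phi σ (-a+d) - Phi σ (-a) :=
    interval_Phi σ _ _
  have key : (∫ t in (-a-d)..(-a), gpdf σ 0 t) ≤ ∫ t in (-a)..(-a+d), gpdf σ 0 t := by
    have s1 : (∫ t in (-a-d)..(-a), gpdf σ 0 t) = ∫ t in a..(a+d), gpdf σ 0 t := by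
      have h := intervalIntegral.integral_comp_neg (a := a) (b := a+d) (f := gpdf σ 0)
      simp_rw [gpdf_even] at h
      rw [h, show -(a+d) = -a-d by ring]
    have s2 : (∫ t in a..(a+d), gpdf σ 0 t)
        = ∫ x in (-a)..(-a+d), gpdf σ 0 (x + 2*a) := by
      rw [intervalIntegral.integral_comp_add_right (gpdf σ 0) (2*a),
        show -a + 2*a = a by ring, show -a+d + 2*a = a + d by ring]
    rw [s1, s2]
    apply intervalIntegral.integral_mono_on (by linarith)
      (((continuous_gpdf σ 0).comp (by fun_prop)).intervalIntegrable _ _)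
      ((continuous_gpdf σ 0).intervalIntegrable _ _)
    intro x hx
    have hx1 : -a ≤ x := hx.1
    show gpdf σ 0 (x + 2*a) ≤ gpdf σ 0 x
    exact gpdf_anti hσ (abs_le_abs (by linarith) (by linarith))
  linarith

lemma Tt_antitoneOn {σ d : ℝ} (hσ : 0 < σ) (hd : 0 ≤ d) :
    AntitoneOn (Tt σ d) (Set.Ici 0) := by
  apply antitoneOn_of_deriv_nonpos (convex_Ici 0)
    (fun x _ => (hasDerivAt_Tt σ d x).continuousAt.continuousWithinAt)
    (fun x hx => (hasDerivAt_Tt σ d x).differentiableAt.differentiableWithinAt)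
  intro x hx
  rw [(hasDerivAt_Tt σ d x).deriv]
  rw [interior_Ici] at hx
  exact Tt_deriv_nonpos hσ hd (le_of_lt hx)

lemma Tt_le_of_abs_le {σ d a b : ℝ} (hσ : 0 < σ) (hd : 0 ≤ d) (h : |a| ≤ |b|) :
    Tt σ d b ≤ Tt σ d a := by
  have ha : Tt σ d a = Tt σ d |a| := by
    rcases abs_cases a with ⟨h1, _⟩ | ⟨h1, _⟩
    · rw [h1]
    · rw [h1, Tt_even]
  have hb : Tt σ d b = Tt σ d |b| := by
    rcases abs_cases b with ⟨h1, _⟩ | ⟨h1, _⟩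
    · rw [h1]
    · rw [h1, Tt_even]
  rw [ha, hb]
  exact Tt_antitoneOn hσ hd (abs_nonneg a) (abs_nonneg b) h

section Blevs

variable {Cq : ℝ} {k : ℕ}

lemma kcast {k : ℕ} (hk : 2 ≤ k) : (1:ℝ) ≤ (k:ℝ) - 1 := by
  have : (2:ℝ) ≤ (k:ℝ) := by exact_mod_cast hk
  linarith

lemma delta_pos (hC : 0 < Cq) (hk : 2 ≤ k) : 0 < 2 * Cq / ((k:ℝ) - 1) := by
  have := kcast hk
  positivity

lemma Blev_succ (Cq : ℝ) (k r : ℕ) :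
    Blev Cq k (r+1) = Blev Cq k r + 2 * Cq / ((k:ℝ) - 1) := by
  unfold Blev
  push_cast
  ring

lemma Blev_last (Cq : ℝ) (hk : 2 ≤ k) : Blev Cq k (k-1) = Cq := by
  unfold Blev
  rw [Nat.cast_sub (by omega : 1 ≤ k)]
  have h : (k:ℝ) - 1 ≠ 0 := by have := kcast hk; linarith
  push_cast
  field_simp
  ring

lemma Blev_k2 (Cq : ℝ) (hk : 2 ≤ k) :
    Blev Cq k (k-2) = Cq - 2 * Cq / ((k:ℝ) - 1) := by
  have h := Blev_succ Cq k (k-2)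
  rw [show k-2+1 = k-1 by omega] at h
  rw [Blev_last Cq hk] at h
  linarith

lemma Blev_bounds (hC : 0 < Cq) (hk : 2 ≤ k) {r : ℕ} (hr : r < k) :
    -Cq ≤ Blev Cq k r ∧ Blev Cq k r ≤ Cq := by
  have hδ := delta_pos hC hk
  have h1 : (0:ℝ) ≤ (r:ℝ) := Nat.cast_nonneg r
  have h2 : (r:ℝ) ≤ (k:ℝ) - 1 := by
    have : (r:ℝ) + 1 ≤ (k:ℝ) := by exact_mod_cast hr
    linarith
  constructor
  · unfold Blev; nlinarith
  · unfold Blev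
    have hne : (k:ℝ) - 1 ≠ 0 := by have := kcast hk; linarith
    have h3 : ((k:ℝ) - 1) * (2 * Cq / ((k:ℝ) - 1)) = 2 * Cq := by
      field_simp
    nlinarith

end Blevs

section IntHelpers

variable {σ : ℝ} (hσ : 0 < σ)

/-- left ramp integral is at most `d` times the mass of `Iic c`. -/
lemma J_le_Iic (hσ : 0 < σ) {d : ℝ} (hd : 0 ≤ d) (m c : ℝ) :
    (∫ t in (c-d)..c, gpdf σ m t * (t - (c-d))) ≤ d * ∫ t in Set.Iic c, gpdf σ m t := by
  have hcd : c - d ≤ c := by linarith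
  have step1 : (∫ t in (c-d)..c, gpdf σ m t * (t - (c-d)))
      ≤ ∫ t in (c-d)..c, gpdf σ m t * d := by
    apply intervalIntegral.integral_mono_on hcd
      (((continuous_gpdf σ m).mul (by fun_prop)).intervalIntegrable _ _)
      (((continuous_gpdf σ m).mul continuous_const).intervalIntegrable _ _)
    intro t ht
    exact mul_le_mul_of_nonneg_left (by linarith [ht.2]) (gpdf_nonneg hσ m t)
  have step2 : (∫ t in (c-d)..c, gpdf σ m t * d)
      = d * ∫ t in Set.Ioc (c-d) c, gpdf σ m t := by
    rw [intervalIntegral.integral_mul_const, intervalIntegral.integral_of_le hcd]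
    ring
  have step3 : (∫ t in Set.Ioc (c-d) c, gpdf σ m t) ≤ ∫ t in Set.Iic c, gpdf σ m t := by
    apply setIntegral_mono_set ((integrable_gpdf hσ m).integrableOn)
      (Filter.Eventually.of_forall fun t => gpdf_nonneg hσ m t)
    exact HasSubset.Subset.eventuallyLE Set.Ioc_subset_Iic_self
  calc (∫ t in (c-d)..c, gpdf σ m t * (t - (c-d)))
      ≤ ∫ t in (c-d)..c, gpdf σ m t * d := step1
    _ = d * ∫ t in Set.Ioc (c-d) c, gpdf σ m t := step2
    _ ≤ d * ∫ t in Set.Iic c, gpdf σ m t := by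
        apply mul_le_mul_of_nonneg_left step3 hd

/-- right ramp integral is at most `d` times the mass of `Ici c`. -/
lemma K_le_Ici (hσ : 0 < σ) {d : ℝ} (hd : 0 ≤ d) (m c : ℝ) :
    (∫ t in c..(c+d), gpdf σ m t * (c + d - t)) ≤ d * ∫ t in Set.Ici c, gpdf σ m t := by
  have hcd : c ≤ c + d := by linarith
  have step1 : (∫ t in c..(c+d), gpdf σ m t * (c + d - t))
      ≤ ∫ t in c..(c+d), gpdf σ m t * d := by
    apply intervalIntegral.integral_mono_on hcd
      (((continuous_gpdf σ m).mul (by fun_prop)).intervalIntegrable _ _)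
      (((continuous_gpdf σ m).mul continuous_const).intervalIntegrable _ _)
    intro t ht
    exact mul_le_mul_of_nonneg_left (by linarith [ht.1]) (gpdf_nonneg hσ m t)
  have step2 : (∫ t in c..(c+d), gpdf σ m t * d)
      = d * ∫ t in Set.Ioc c (c+d), gpdf σ m t := by
    rw [intervalIntegral.integral_mul_const, intervalIntegral.integral_of_le hcd]
    ring
  have step3 : (∫ t in Set.Ioc c (c+d), gpdf σ m t) ≤ ∫ t in Set.Ici c, gpdf σ m t := by
    apply setIntegral_mono_set ((integrable_gpdf hσ m).integrableOn)
      (Filter.Eventually.of_forall fun t => gpdf_nonneg hσ m t)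
    exact HasSubset.Subset.eventuallyLE (Set.Ioc_subset_Ioi_self.trans Set.Ioi_subset_Ici_self)
  calc (∫ t in c..(c+d), gpdf σ m t * (c + d - t))
      ≤ ∫ t in c..(c+d), gpdf σ m t * d := step1
    _ = d * ∫ t in Set.Ioc c (c+d), gpdf σ m t := step2
    _ ≤ d * ∫ t in Set.Ici c, gpdf σ m t := by
        apply mul_le_mul_of_nonneg_left step3 hd

end IntHelpers

section DivHelpers

variable {σ : ℝ}

lemma J_div_le_Ioc (hσ : 0 < σ) {d : ℝ} (hd : 0 < d) (m c : ℝ) :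
    (∫ t in (c-d)..c, gpdf σ m t * (t - (c-d))) / d
      ≤ ∫ t in Set.Ioc (c-d) c, gpdf σ m t := by
  rw [div_le_iff₀ hd]
  have hcd : c - d ≤ c := by linarith
  have step1 : (∫ t in (c-d)..c, gpdf σ m t * (t - (c-d)))
      ≤ ∫ t in (c-d)..c, gpdf σ m t * d := by
    apply intervalIntegral.integral_mono_on hcd
      (((continuous_gpdf σ m).mul (by fun_prop)).intervalIntegrable _ _)
      (((continuous_gpdf σ m).mul continuous_const).intervalIntegrable _ _)
    intro t ht
    exact mul_le_mul_of_nonneg_left (by linarith [ht.2]) (gpdf_nonneg hσ m t)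
  have step2 : (∫ t in (c-d)..c, gpdf σ m t * d)
      = (∫ t in Set.Ioc (c-d) c, gpdf σ m t) * d := by
    rw [intervalIntegral.integral_mul_const, intervalIntegral.integral_of_le hcd]
  linarith [step1, step2.le, step2.ge]

lemma K_div_le_Ioc (hσ : 0 < σ) {d : ℝ} (hd : 0 < d) (m c : ℝ) :
    (∫ t in c..(c+d), gpdf σ m t * (c + d - t)) / d
      ≤ ∫ t in Set.Ioc c (c+d), gpdf σ m t := by
  rw [div_le_iff₀ hd]
  have hcd : c ≤ c + d := by linarith
  have step1 : (∫ t in c..(c+d), gpdf σ m t * (c + d - t))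
      ≤ ∫ t in c..(c+d), gpdf σ m t * d := by
    apply intervalIntegral.integral_mono_on hcd
      (((continuous_gpdf σ m).mul (by fun_prop)).intervalIntegrable _ _)
      (((continuous_gpdf σ m).mul continuous_const).intervalIntegrable _ _)
    intro t ht
    exact mul_le_mul_of_nonneg_left (by linarith [ht.1]) (gpdf_nonneg hσ m t)
  have step2 : (∫ t in c..(c+d), gpdf σ m t * d)
      = (∫ t in Set.Ioc c (c+d), gpdf σ m t) * d := by
    rw [intervalIntegral.integral_mul_const, intervalIntegral.integral_of_le hcd]
  linarith [step1, step2.le]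

lemma mass_le_one (hσ : 0 < σ) (m : ℝ) (s : Set ℝ) :
    (∫ t in s, gpdf σ m t) ≤ 1 := by
  rw [← integral_gpdf hσ m]
  exact setIntegral_le_integral (integrable_gpdf hσ m)
    (Filter.Eventually.of_forall fun t => gpdf_nonneg hσ m t)

lemma mass_nonneg (hσ : 0 < σ) (m : ℝ) (s : Set ℝ) :
    0 ≤ ∫ t in s, gpdf σ m t :=
  setIntegral_nonneg_of_ae (Filter.Eventually.of_forall fun t => gpdf_nonneg hσ m t)

lemma Iic_add_Ioc_le_one (hσ : 0 < σ) (m : ℝ) {a b : ℝ} (h : a ≤ b) :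
    (∫ t in Set.Iic a, gpdf σ m t) + (∫ t in Set.Ioc a b, gpdf σ m t) ≤ 1 := by
  rw [← setIntegral_union (Set.Iic_disjoint_Ioc le_rfl) measurableSet_Ioc
    ((integrable_gpdf hσ m).integrableOn) ((integrable_gpdf hσ m).integrableOn)]
  rw [Set.Iic_union_Ioc_eq_Iic h]
  exact mass_le_one hσ m _

lemma Ioc_add_Ici_le_one (hσ : 0 < σ) (m : ℝ) {a b : ℝ} (h : a ≤ b) :
    (∫ t in Set.Ioc a b, gpdf σ m t) + (∫ t in Set.Ici b, gpdf σ m t) ≤ 1 := by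
  rw [integral_Ici_eq_integral_Ioi]
  rw [← setIntegral_union (Set.Ioc_disjoint_Ioi le_rfl) measurableSet_Ioi
    ((integrable_gpdf hσ m).integrableOn) ((integrable_gpdf hσ m).integrableOn)]
  rw [Set.Ioc_union_Ioi_eq_Ioi h]
  exact mass_le_one hσ m _

lemma Ioc_add_Ioc_le_one (hσ : 0 < σ) (m : ℝ) {a b c : ℝ} (h1 : a ≤ b) (h2 : b ≤ c) :
    (∫ t in Set.Ioc a b, gpdf σ m t) + (∫ t in Set.Ioc b c, gpdf σ m t) ≤ 1 := by
  rw [← setIntegral_union (Set.Ioc_disjoint_Ioc_of_le le_rfl) measurableSet_Ioc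
    ((integrable_gpdf hσ m).integrableOn) ((integrable_gpdf hσ m).integrableOn)]
  rw [Set.Ioc_union_Ioc_eq_Ioc h1 h2]
  exact mass_le_one hσ m _

end DivHelpers

lemma Tt_div_le_qgPmf {Cq σ : ℝ} (hC : 0 < Cq) (hσ : 0 < σ) {k : ℕ} (hk : 2 ≤ k)
    {r : ℕ} (hr : r < k) (m : ℝ) :
    Tt σ (2*Cq/((k:ℝ)-1)) (m - Blev Cq k r) / (2*Cq/((k:ℝ)-1)) ≤ qgPmf Cq σ k m r := by
  have hδ : 0 < 2*Cq/((k:ℝ)-1) := delta_pos hC hk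
  rw [Tt_eq σ m (Blev Cq k r) (2*Cq/((k:ℝ)-1))]
  by_cases hr0 : r = 0
  · subst hr0
    rw [qgPmf, if_pos rfl]
    have hB1 : Blev Cq k 1 = Blev Cq k 0 + 2*Cq/((k:ℝ)-1) := by
      simpa using Blev_succ Cq k 0
    rw [hB1, intervalIntegral.integral_div, add_div]
    apply add_le_add _ le_rfl
    rw [div_le_iff₀ hδ]
    calc (∫ t in (Blev Cq k 0 - 2*Cq/((k:ℝ)-1))..(Blev Cq k 0),
          gpdf σ m t * (t - (Blev Cq k 0 - 2*Cq/((k:ℝ)-1))))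
        ≤ (2*Cq/((k:ℝ)-1)) * ∫ t in Set.Iic (Blev Cq k 0), gpdf σ m t :=
          J_le_Iic hσ hδ.le m (Blev Cq k 0)
      _ = (∫ t in Set.Iic (Blev Cq k 0), gpdf σ m t) * (2*Cq/((k:ℝ)-1)) := by ring
  by_cases hrk : r = k - 1
  · rw [qgPmf, if_neg hr0, if_pos hrk, hrk]
    have hBk2 : Blev Cq k (k-2) = Blev Cq k (k-1) - 2*Cq/((k:ℝ)-1) := by
      rw [Blev_k2 Cq hk, Blev_last Cq hk]
    rw [hBk2, intervalIntegral.integral_div, add_div]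
    apply add_le_add le_rfl
    rw [div_le_iff₀ hδ]
    calc (∫ t in (Blev Cq k (k-1))..(Blev Cq k (k-1) + 2*Cq/((k:ℝ)-1)),
          gpdf σ m t * (Blev Cq k (k-1) + 2*Cq/((k:ℝ)-1) - t))
        ≤ (2*Cq/((k:ℝ)-1)) * ∫ t in Set.Ici (Blev Cq k (k-1)), gpdf σ m t :=
          K_le_Ici hσ hδ.le m (Blev Cq k (k-1))
      _ = (∫ t in Set.Ici (Blev Cq k (k-1)), gpdf σ m t) * (2*Cq/((k:ℝ)-1)) := by ring
  · rw [qgPmf, if_neg hr0, if_neg hrk]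
    have hrge1 : 1 ≤ r := Nat.one_le_iff_ne_zero.mpr hr0
    have hBm : Blev Cq k (r-1) = Blev Cq k r - 2*Cq/((k:ℝ)-1) := by
      have h := Blev_succ Cq k (r-1)
      rw [show r-1+1 = r by omega] at h
      linarith
    have hBp : Blev Cq k (r+1) = Blev Cq k r + 2*Cq/((k:ℝ)-1) := Blev_succ Cq k r
    rw [hBm, hBp, intervalIntegral.integral_div, intervalIntegral.integral_div, add_div]

lemma qgPmf_le_one {Cq σ : ℝ} (hC : 0 < Cq) (hσ : 0 < σ) {k : ℕ} (hk : 2 ≤ k)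
    {r : ℕ} (hr : r < k) (m : ℝ) : qgPmf Cq σ k m r ≤ 1 := by
  have hδ : 0 < 2*Cq/((k:ℝ)-1) := delta_pos hC hk
  by_cases hr0 : r = 0
  · subst hr0
    rw [qgPmf, if_pos rfl]
    have hB1 : Blev Cq k 1 = Blev Cq k 0 + 2*Cq/((k:ℝ)-1) := by
      simpa using Blev_succ Cq k 0
    rw [hB1, intervalIntegral.integral_div]
    have h2 := K_div_le_Ioc hσ hδ m (Blev Cq k 0)
    have h3 := Iic_add_Ioc_le_one hσ m
      (show Blev Cq k 0 ≤ Blev Cq k 0 + 2*Cq/((k:ℝ)-1) by linarith)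
    linarith
  by_cases hrk : r = k - 1
  · rw [qgPmf, if_neg hr0, if_pos hrk]
    have hBk2 : Blev Cq k (k-2) = Blev Cq k (k-1) - 2*Cq/((k:ℝ)-1) := by
      rw [Blev_k2 Cq hk, Blev_last Cq hk]
    rw [hBk2, intervalIntegral.integral_div]
    have h2 := J_div_le_Ioc hσ hδ m (Blev Cq k (k-1))
    have h3 := Ioc_add_Ici_le_one hσ m
      (show Blev Cq k (k-1) - 2*Cq/((k:ℝ)-1) ≤ Blev Cq k (k-1) by linarith)
    linarith
  · rw [qgPmf, if_neg hr0, if_neg hrk]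
    have hrge1 : 1 ≤ r := Nat.one_le_iff_ne_zero.mpr hr0
    have hBm : Blev Cq k (r-1) = Blev Cq k r - 2*Cq/((k:ℝ)-1) := by
      have h := Blev_succ Cq k (r-1)
      rw [show r-1+1 = r by omega] at h
      linarith
    have hBp : Blev Cq k (r+1) = Blev Cq k r + 2*Cq/((k:ℝ)-1) := Blev_succ Cq k r
    rw [hBm, hBp, intervalIntegral.integral_div, intervalIntegral.integral_div]
    have h1 := J_div_le_Ioc hσ hδ m (Blev Cq k r)
    have h2 := K_div_le_Ioc hσ hδ m (Blev Cq k r)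
    have h3 := Ioc_add_Ioc_le_one hσ m
      (show Blev Cq k r - 2*Cq/((k:ℝ)-1) ≤ Blev Cq k r by linarith)
      (show Blev Cq k r ≤ Blev Cq k r + 2*Cq/((k:ℝ)-1) by linarith)
    linarith


/-- Theorem 2, case `α = ∞`: for all `x, x' ∈ [-C_q/2, C_q/2]` and every
`r ∈ {0, …, k-1}`, the log-likelihood ratio of the quantized-Gaussian pmfs is bounded
by `log(δ / ∫_{B(k-2)}^{B(k-1)} f_{-C_q/2}(t)·(t - B(k-2)) dt)`. -/
theorem quantGauss_max_divergence_bound (Cq σ : ℝ) (hC : 0 < Cq) (hσ : 0 < σ)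
    (k : ℕ) (hk : 2 ≤ k) (x x' : ℝ)
    (hx : x ∈ Set.Icc (-(Cq / 2)) (Cq / 2)) (hx' : x' ∈ Set.Icc (-(Cq / 2)) (Cq / 2))
    (r : ℕ) (hr : r < k) :
    Real.log (qgPmf Cq σ k x r / qgPmf Cq σ k x' r)
      ≤ Real.log ((2 * Cq / ((k : ℝ) - 1)) /
          ∫ t in (Blev Cq k (k - 2))..(Blev Cq k (k - 1)),
            gpdf σ (-(Cq / 2)) t * (t - Blev Cq k (k - 2))) := by
  have hδ : 0 < 2*Cq/((k:ℝ)-1) := delta_pos hC hk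
  set I : ℝ := ∫ t in (Blev Cq k (k - 2))..(Blev Cq k (k - 1)),
      gpdf σ (-(Cq / 2)) t * (t - Blev Cq k (k - 2)) with hIdef
  have hBk2 : Blev Cq k (k-2) = Cq - 2*Cq/((k:ℝ)-1) := Blev_k2 Cq hk
  have hBk1 : Blev Cq k (k-1) = Cq := Blev_last Cq hk
  have hIpos : 0 < I := by
    rw [hIdef]
    apply intervalIntegral.intervalIntegral_pos_of_pos_on
      (((continuous_gpdf σ _).mul (by fun_prop)).intervalIntegrable _ _)
    · intro t ht
      exact mul_pos (gpdf_pos hσ _ _) (by linarith [ht.1])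
    · rw [hBk2, hBk1]; linarith
  -- I is at most Tt at the extreme point
  have hITt : I ≤ Tt σ (2*Cq/((k:ℝ)-1)) (-(Cq/2) - Cq) := by
    have hTT := Tt_eq σ (-(Cq/2)) Cq (2*Cq/((k:ℝ)-1))
    have hK : 0 ≤ ∫ t in Cq..(Cq + 2*Cq/((k:ℝ)-1)),
        gpdf σ (-(Cq/2)) t * (Cq + 2*Cq/((k:ℝ)-1) - t) := by
      apply intervalIntegral.integral_nonneg (by linarith)
      intro t ht
      exact mul_nonneg (gpdf_nonneg hσ _ _) (by linarith [ht.2])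
    rw [hIdef, hBk2, hBk1]
    rw [hTT]
    have : Cq - 2*Cq/((k:ℝ)-1) = Cq - 2*Cq/((k:ℝ)-1) := rfl
    linarith [hK]
  -- every pmf value of means in the interval is at least I/δ
  have key : ∀ m ∈ Set.Icc (-(Cq/2)) (Cq/2), I / (2*Cq/((k:ℝ)-1)) ≤ qgPmf Cq σ k m r := by
    intro m hm
    have hB := Blev_bounds hC hk hr
    have habs : |m - Blev Cq k r| ≤ |-(Cq/2) - Cq| := by
      rw [abs_of_nonpos (by linarith : -(Cq/2) - Cq ≤ 0)]
      rw [abs_le]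
      constructor
      · have := hm.1; have := hB.2; linarith
      · have := hm.2; have := hB.1; linarith
    have h1 : I ≤ Tt σ (2*Cq/((k:ℝ)-1)) (m - Blev Cq k r) :=
      le_trans hITt (Tt_le_of_abs_le hσ hδ.le habs)
    calc I / (2*Cq/((k:ℝ)-1))
        ≤ Tt σ (2*Cq/((k:ℝ)-1)) (m - Blev Cq k r) / (2*Cq/((k:ℝ)-1)) := by
          apply div_le_div_of_nonneg_right h1 hδ.le
      _ ≤ qgPmf Cq σ k m r := Tt_div_le_qgPmf hC hσ hk hr m
  have hLpos : 0 < I / (2*Cq/((k:ℝ)-1)) := div_pos hIpos hδ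
  have hpx : 0 < qgPmf Cq σ k x r := lt_of_lt_of_le hLpos (key x hx)
  have hpx' : 0 < qgPmf Cq σ k x' r := lt_of_lt_of_le hLpos (key x' hx')
  apply Real.log_le_log (div_pos hpx hpx')
  calc qgPmf Cq σ k x r / qgPmf Cq σ k x' r
      ≤ 1 / (I / (2*Cq/((k:ℝ)-1))) :=
        div_le_div₀ (by positivity) (qgPmf_le_one hC hσ hk hr x) hLpos (key x' hx')
    _ = (2*Cq/((k:ℝ)-1)) / I := one_div_div _ _
end
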